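/- Let N be a near hexagon of order (2,2) with v points in total. Then for every point x of N, the number of quads of N containing x equals (63 − v)/12; in particular, 12 divides 63 − v. -/

import Mathlib

/-- The collinearity graph of a point-line geometry whose lines are given as
sets of points: two points are adjacent when they are distinct and lie on a
common line. -/
def collGraph {P : Type*} (Lines : Set (Set P)) : SimpleGraph P where
  Adj x y := x ≠ y ∧ ∃ L ∈ Lines, x ∈ L ∧ y ∈ L
  symm := by
    constructor
    rintro x y ⟨hxy, L, hL, hx, hy⟩
    exact ⟨hxy.symm, L, hL, hy, hx⟩
  loopless := by
    constructor
    rintro x ⟨h, -⟩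
    exact h rfl

/-- A near `2d`-gon: a partial linear space (every line carries at least two
points, two distinct points lie on at most one common line) whose collinearity
graph is connected of diameter `d`, and in which for every point `x` and every
line `L` there is a unique point of `L` nearest to `x`.  A near hexagon is a
`NearPolygon P 3`, a near octagon is a `NearPolygon P 4`. -/
structure NearPolygon (P : Type*) (d : ℕ) where
  Lines : Set (Set P)
  two_pts : ∀ L ∈ Lines, ∃ x ∈ L, ∃ y ∈ L, x ≠ y
  unique_line : ∀ L₁ ∈ Lines, ∀ L₂ ∈ Lines, ∀ x y : P,
    x ≠ y → x ∈ L₁ → y ∈ L₁ → x ∈ L₂ → y ∈ L₂ → L₁ = L₂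
  connected : (collGraph Lines).Connected
  diam_le : ∀ x y : P, (collGraph Lines).dist x y ≤ d
  diam_eq : ∃ x y : P, (collGraph Lines).dist x y = d
  near : ∀ (x : P), ∀ L ∈ Lines, ∃! y, y ∈ L ∧
    ∀ z ∈ L, (collGraph Lines).dist x y ≤ (collGraph Lines).dist x z

/-- A near polygon has order `(s,t)` if every line is incident with exactly
`s+1` points and every point is incident with exactly `t+1` lines. -/
def NearPolygon.hasOrder {P : Type*} {d : ℕ} (N : NearPolygon P d) (s t : ℕ) : Prop :=
  (∀ L ∈ N.Lines, L.ncard = s + 1) ∧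
  (∀ x : P, {L | L ∈ N.Lines ∧ x ∈ L}.ncard = t + 1)

/-- A semi-valuation: every line `L` contains a unique point `xL` such that
every other point of `L` has value `f xL + 1`. -/
def IsSemiValuation {P : Type*} (Lines : Set (Set P)) (f : P → ℤ) : Prop :=
  ∀ L ∈ Lines, ∃! xL, xL ∈ L ∧ ∀ x ∈ L, x ≠ xL → f x = f xL + 1

/-- A valuation: a semi-valuation whose minimum value is `0`. -/
def IsValuation {P : Type*} (Lines : Set (Set P)) (f : P → ℤ) : Prop :=
  IsSemiValuation Lines f ∧ (∀ x, 0 ≤ f x) ∧ (∃ x, f x = 0)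

/-- `ι` realizes the geometry with lines `LQ` as a full isometrically embedded
subgeometry of the geometry with lines `LP` (lines being identified with their
point sets, fullness amounts to lines mapping onto lines). -/
structure IsFullIsomEmb {Q P : Type*} (LQ : Set (Set Q)) (LP : Set (Set P))
    (ι : Q → P) : Prop where
  inj : Function.Injective ι
  line_map : ∀ L ∈ LQ, ι '' L ∈ LP
  isometric : ∀ x y : Q, (collGraph LP).dist (ι x) (ι y) = (collGraph LQ).dist x y

/-- The distance `d(x, P)` from a point `x` of the ambient geometry to the
point set of the embedded subgeometry. -/
noncomputable def distToSub {Q P : Type*} (LP : Set (Set P)) (ι : Q → P) (x : P) : ℕ :=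
  sInf (Set.range fun z : Q => (collGraph LP).dist x (ι z))

/-- The function `f_x : y ↦ d(x, y) - d(x, P)` induced on the embedded
subgeometry by a point `x` of the ambient geometry. -/
noncomputable def inducedVal {Q P : Type*} (LP : Set (Set P)) (ι : Q → P) (x : P) :
    Q → ℤ :=
  fun y => ((collGraph LP).dist x (ι y) : ℤ) - (distToSub LP ι x : ℤ)

/-- Two valuations are neighboring if `|f1 x - f2 x + ε| ≤ 1` for all `x`,
for some integer `ε`. -/
def Neighboring {P : Type*} (f1 f2 : P → ℤ) : Prop :=
  ∃ ε : ℤ, ∀ x, |f1 x - f2 x + ε| ≤ 1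

/-- The semi-valuation `f3'` built from two neighboring valuations `f1, f2`
and a compatible `ε`. -/
def starFun {P : Type*} (f1 f2 : P → ℤ) (ε : ℤ) (x : P) : ℤ :=
  if f1 x = f2 x - ε then f1 x - 1 else max (f1 x) (f2 x - ε)

/-- `StarRel f1 f2 f3` expresses `f1 * f2 = f3`: some `ε ∈ {-1,0,1}` witnesses
that `f1` and `f2` are neighboring, and, for every such `ε`, subtracting the
minimum value `m` of `f3' = starFun f1 f2 ε` from `f3'` yields `f3`. -/
def StarRel {P : Type*} (f1 f2 f3 : P → ℤ) : Prop :=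
  (∃ ε ∈ ({-1, 0, 1} : Set ℤ), ∀ x, |f1 x - f2 x + ε| ≤ 1) ∧
  ∀ ε ∈ ({-1, 0, 1} : Set ℤ), (∀ x, |f1 x - f2 x + ε| ≤ 1) →
    ∃ m : ℤ, IsLeast (Set.range (starFun f1 f2 ε)) m ∧
      ∀ x, f3 x = starFun f1 f2 ε x - m

/-- A subspace: together with two distinct collinear points it contains every
line through them. -/
def IsSubspace {P : Type*} (Lines : Set (Set P)) (X : Set P) : Prop :=
  ∀ L ∈ Lines, ∀ x ∈ L, ∀ y ∈ L, x ≠ y → x ∈ X → y ∈ X → L ⊆ X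

/-- A convex subspace: a subspace containing every point on a shortest path
between any two of its points. -/
def IsConvexSubspace {P : Type*} (Lines : Set (Set P)) (X : Set P) : Prop :=
  IsSubspace Lines X ∧
  ∀ x ∈ X, ∀ y ∈ X, ∀ z : P,
    (collGraph Lines).dist x z + (collGraph Lines).dist z y
      = (collGraph Lines).dist x y → z ∈ X

/-- A quad: a convex subspace of diameter `2` inducing (with the lines fully
contained in it) a nondegenerate generalized quadrangle. -/
def IsQuad {P : Type*} (Lines : Set (Set P)) (Q : Set P) : Prop :=
  IsConvexSubspace Lines Q ∧
  (∀ x ∈ Q, ∀ y ∈ Q, (collGraph Lines).dist x y ≤ 2) ∧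
  (∃ x ∈ Q, ∃ y ∈ Q, (collGraph Lines).dist x y = 2) ∧
  (∀ x ∈ Q, ∀ L ∈ Lines, L ⊆ Q → x ∉ L →
    ∃! y, y ∈ L ∧ (collGraph Lines).Adj x y) ∧
  (∀ x ∈ Q, ∃ L₁ ∈ Lines, ∃ L₂ ∈ Lines,
    L₁ ⊆ Q ∧ L₂ ⊆ Q ∧ x ∈ L₁ ∧ x ∈ L₂ ∧ L₁ ≠ L₂) ∧
  (∃ x ∈ Q, ∃ y ∈ Q, x ≠ y ∧ ¬ (collGraph Lines).Adj x y)

/-- A quad has order `(s,t')` if each of its lines has `s+1` points and each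
of its points is on exactly `t'+1` lines contained in the quad. -/
def QuadHasOrder {P : Type*} (Lines : Set (Set P)) (Q : Set P) (s t' : ℕ) : Prop :=
  (∀ L ∈ Lines, L ⊆ Q → L.ncard = s + 1) ∧
  (∀ x ∈ Q, {L | L ∈ Lines ∧ L ⊆ Q ∧ x ∈ L}.ncard = t' + 1)



namespace NHG
open SimpleGraph Set

variable {P : Type*}

/-- distance abbreviation -/
noncomputable abbrev dd (N : NearPolygon P 3) : P → P → ℕ := (collGraph N.Lines).dist

/-- adjacency abbreviation -/
abbrev adj (N : NearPolygon P 3) : P → P → Prop := (collGraph N.Lines).Adj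

section Basics
variable (N : NearPolygon P 3)

lemma adj_symm {a b : P} (h : adj N a b) : adj N b a := h.symm
lemma adj_ne {a b : P} (h : adj N a b) : a ≠ b := h.ne
lemma adj_irr (a : P) : ¬ adj N a a := (collGraph N.Lines).loopless.irrefl a

lemma adj_of_line {L : Set P} {a b : P} (hL : L ∈ N.Lines) (ha : a ∈ L) (hb : b ∈ L)
    (hab : a ≠ b) : adj N a b := ⟨hab, L, hL, ha, hb⟩

lemma deq0 {a b : P} : dd N a b = 0 ↔ a = b := by
  rw [SimpleGraph.dist_eq_zero_iff_eq_or_not_reachable]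
  simp [N.connected a b]

lemma dself (a : P) : dd N a a = 0 := (deq0 N).2 rfl

lemma dcomm (a b : P) : dd N a b = dd N b a := SimpleGraph.dist_comm

lemma d1adj {a b : P} : dd N a b = 1 ↔ adj N a b := SimpleGraph.dist_eq_one_iff_adj

lemma dtri (a b c : P) : dd N a c ≤ dd N a b + dd N b c := N.connected.dist_triangle

lemma dist_le_add1 {a b c : P} (h : adj N b c) : dd N a c ≤ dd N a b + 1 := by
  have h0 := dtri N a b c
  have h1 : dd N b c = 1 := (d1adj N).2 h
  omega

lemma ddiam {a b : P} : dd N a b ≤ 3 := N.diam_le a b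

lemma dist2 {a b : P} (hne : a ≠ b) (hnadj : ¬ adj N a b) (hle : dd N a b ≤ 2) :
    dd N a b = 2 := by
  have h : dd N a b = 0 ∨ dd N a b = 1 ∨ dd N a b = 2 := by omega
  rcases h with h | h | h
  · exact absurd ((deq0 N).1 h) hne
  · exact absurd ((d1adj N).1 h) hnadj
  · exact h

lemma pred_exists {a b : P} {n : ℕ} (h : dd N a b = n + 1) : ∃ z, adj N z b ∧ dd N a z = n := by
  obtain ⟨p, hp⟩ := (N.connected b a).exists_walk_length_eq_dist
  have hp' : p.length = n + 1 := by rw [hp, SimpleGraph.dist_comm]; exact h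
  cases p with
  | nil =>
      exfalso
      simp at hp'
  | cons hadj q =>
      rename_i z
      refine ⟨z, hadj.symm, ?_⟩
      have hlen : q.length = n := by simp at hp'; omega
      have h1 : dd N a z ≤ n := by
        have h2 := SimpleGraph.dist_le q.reverse
        simpa [hlen] using h2
      have h2 : dd N a b ≤ dd N a z + 1 := dist_le_add1 N hadj.symm
      omega

lemma line_rep (hord : N.hasOrder 2 2) {L : Set P} (hL : L ∈ N.Lines) :
    ∃ a b c : P, a ≠ b ∧ a ≠ c ∧ b ≠ c ∧ L = {a, b, c} := by
  have h3 : L.ncard = 3 := hord.1 L hL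
  exact Set.ncard_eq_three.1 h3

lemma line_rep_pair (hord : N.hasOrder 2 2) {L : Set P} {a b : P} (hL : L ∈ N.Lines)
    (ha : a ∈ L) (hb : b ∈ L) (hab : a ≠ b) : ∃ c, c ≠ a ∧ c ≠ b ∧ L = {a, b, c} := by
  obtain ⟨x, y, z, hxy, hxz, hyz, rfl⟩ := line_rep N hord hL
  simp only [Set.mem_insert_iff, Set.mem_singleton_iff] at ha hb
  rcases ha with rfl | rfl | rfl <;> rcases hb with rfl | rfl | rfl
  · exact absurd rfl hab
  · exact ⟨z, fun h => hxz h.symm, fun h => hyz h.symm, rfl⟩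
  · exact ⟨y, fun h => hxy h.symm, fun h => hyz h, by ext w; simp; tauto⟩
  · exact ⟨z, fun h => hyz h.symm, fun h => hxz h.symm, by ext w; simp; tauto⟩
  · exact absurd rfl hab
  · exact ⟨x, fun h => hxy h, fun h => hxz h, by ext w; simp; tauto⟩
  · exact ⟨y, fun h => hyz h, fun h => hxy h.symm, by ext w; simp; tauto⟩
  · exact ⟨x, fun h => hxz h, fun h => hxy h, by ext w; simp; tauto⟩
  · exact absurd rfl hab

lemma near_pattern (p : P) {L : Set P} (hL : L ∈ N.Lines) :
    ∃ m ∈ L, ∀ z ∈ L, z ≠ m → dd N p z = dd N p m + 1 := by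
  obtain ⟨m, ⟨hmL, hmin⟩, huniq⟩ := N.near p L hL
  refine ⟨m, hmL, fun z hz hzm => ?_⟩
  have h1 : dd N p m ≤ dd N p z := hmin z hz
  have h2 : dd N p z ≤ dd N p m + 1 :=
    dist_le_add1 N (adj_of_line N hL hmL hz (Ne.symm hzm))
  have h3 : dd N p z ≠ dd N p m := by
    intro he
    exact hzm (huniq z ⟨hz, fun w hw => le_trans (le_of_eq he) (hmin w hw)⟩)
  omega

/-- If `p ∈ L` then every other point of `L` is at distance 1. -/
lemma mem_line_dist {L : Set P} {p z : P} (hL : L ∈ N.Lines) (hp : p ∈ L) (hz : z ∈ L)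
    (hzp : z ≠ p) : dd N p z = 1 :=
  (d1adj N).2 (adj_of_line N hL hp hz (Ne.symm hzp))

/-- Two points of a line at the same distance force the third to be one closer. -/
lemma forces {L : Set P} {a b c : P} (hL : L ∈ N.Lines) (hrep : L = {a, b, c})
    (hab : a ≠ b) (hac : a ≠ c) (hbc : b ≠ c) {p : P} {k : ℕ}
    (ha : dd N p a = k) (hb : dd N p b = k) : dd N p c + 1 = k := by
  obtain ⟨m, hm, hspec⟩ := near_pattern N p hL
  rw [hrep] at hm hspec
  simp only [Set.mem_insert_iff, Set.mem_singleton_iff] at hm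
  rcases hm with rfl | rfl | rfl
  · have := hspec b (by simp) hab.symm; omega
  · have := hspec a (by simp) hab; omega
  · have := hspec a (by simp) hac; omega

lemma forces2 {L : Set P} {a b c : P} (hL : L ∈ N.Lines) (hrep : L = {a, b, c})
    (hab : a ≠ b) (hac : a ≠ c) (hbc : b ≠ c) {p : P}
    (ha : dd N p a = 1) (hb : dd N p b = 2) : dd N p c = 2 := by
  obtain ⟨m, hm, hspec⟩ := near_pattern N p hL
  rw [hrep] at hm hspec
  simp only [Set.mem_insert_iff, Set.mem_singleton_iff] at hm
  rcases hm with rfl | rfl | rfl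
  · have := hspec c (by simp) (Ne.symm hac); omega
  · have := hspec a (by simp) hab; omega
  · have h1 := hspec a (by simp) hac
    have h2 := hspec b (by simp) hbc
    omega

/-- uniqueness of the line through two given (distinct) points -/
lemma line_unique' {L M : Set P} {a b : P} (hL : L ∈ N.Lines) (hM : M ∈ N.Lines)
    (hab : a ≠ b) (haL : a ∈ L) (hbL : b ∈ L) (haM : a ∈ M) (hbM : b ∈ M) : L = M :=
  N.unique_line L hL M hM a b hab haL hbL haM hbM

/-- two distinct neighbours of `p` that are adjacent lie on a line through `p` -/
lemma adj_of_two (hord : N.hasOrder 2 2) {p a b : P} (ha : dd N p a = 1) (hb : dd N p b = 1)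
    (hab : a ≠ b) (hadj : adj N a b) : ∃ L ∈ N.Lines, p ∈ L ∧ a ∈ L ∧ b ∈ L := by
  obtain ⟨-, L, hL, haL, hbL⟩ := hadj
  obtain ⟨c, hca, hcb, hrep⟩ := line_rep_pair N hord hL haL hbL hab
  have h0 : dd N p c + 1 = 1 := forces N hL hrep hab (Ne.symm hca) (Ne.symm hcb) ha hb
  have hpc : p = c := (deq0 N).1 (by omega)
  exact ⟨L, hL, by rw [hrep, hpc]; simp, haL, hbL⟩

/-- points on two different lines through `p` are non-adjacent -/
lemma nonadj (hord : N.hasOrder 2 2) {p a b : P} {La Lb : Set P} (hLa : La ∈ N.Lines)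
    (hLb : Lb ∈ N.Lines) (hpa : p ∈ La) (hpb : p ∈ Lb) (haLa : a ∈ La) (hbLb : b ∈ Lb)
    (hLab : La ≠ Lb) (hap : a ≠ p) (hbp : b ≠ p) : ¬ adj N a b := by
  intro hadj
  have hab : a ≠ b := hadj.ne
  obtain ⟨L, hL, hpL, haL, hbL⟩ :=
    adj_of_two N hord (mem_line_dist N hLa hpa haLa hap) (mem_line_dist N hLb hpb hbLb hbp)
      hab hadj
  have e1 : L = La := line_unique' N hL hLa (Ne.symm hap) hpL haL hpa haLa
  have e2 : L = Lb := line_unique' N hL hLb (Ne.symm hbp) hpL hbL hpb hbLb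
  exact hLab (e1 ▸ e2)

/-- three distinct lines through a point are all of them -/
lemma lines_through_eq (hord : N.hasOrder 2 2) {p : P} {L1 L2 L3 : Set P}
    (h1 : L1 ∈ N.Lines) (h2 : L2 ∈ N.Lines) (h3 : L3 ∈ N.Lines)
    (hp1 : p ∈ L1) (hp2 : p ∈ L2) (hp3 : p ∈ L3)
    (h12 : L1 ≠ L2) (h13 : L1 ≠ L3) (h23 : L2 ≠ L3) :
    ∀ L ∈ N.Lines, p ∈ L → L = L1 ∨ L = L2 ∨ L = L3 := by
  intro L hL hpL
  have hS : {M | M ∈ N.Lines ∧ p ∈ M}.ncard = 3 := hord.2 p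
  have hfin : {M | M ∈ N.Lines ∧ p ∈ M}.Finite :=
    Set.finite_of_ncard_ne_zero (by omega)
  have hsub : ({L1, L2, L3} : Set (Set P)) ⊆ {M | M ∈ N.Lines ∧ p ∈ M} := by
    rintro M (rfl | rfl | rfl) <;> exact ⟨by assumption, by assumption⟩
  have hcard : ({L1, L2, L3} : Set (Set P)).ncard = 3 := by
    rw [Set.ncard_insert_of_notMem (by simp [h12, h13]) (by
          exact (Set.finite_singleton _).insert _),
        Set.ncard_insert_of_notMem (by simp [h23]), Set.ncard_singleton]
  have he : ({L1, L2, L3} : Set (Set P)) = {M | M ∈ N.Lines ∧ p ∈ M} :=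
    Set.eq_of_subset_of_ncard_le hsub (by omega) hfin
  have : L ∈ ({L1, L2, L3} : Set (Set P)) := he ▸ (⟨hL, hpL⟩ : L ∈ {M | M ∈ N.Lines ∧ p ∈ M})
  simpa using this

end Basics


section Finiteness
variable (N : NearPolygon P 3)

lemma line_finite (hord : N.hasOrder 2 2) {L : Set P} (hL : L ∈ N.Lines) : L.Finite :=
  Set.finite_of_ncard_ne_zero (by rw [hord.1 L hL]; omega)

lemma lines_through_finite (hord : N.hasOrder 2 2) (z : P) :
    {L | L ∈ N.Lines ∧ z ∈ L}.Finite :=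
  Set.finite_of_ncard_ne_zero (by rw [hord.2 z]; omega)

lemma finiteP (hord : N.hasOrder 2 2) : Finite P := by
  obtain ⟨x0, y0, -⟩ := N.diam_eq
  have hball : ∀ n : ℕ, {w : P | dd N x0 w ≤ n}.Finite := by
    intro n
    induction n with
    | zero =>
        refine (Set.finite_singleton x0).subset ?_
        intro w hw
        simp only [Set.mem_setOf_eq, Nat.le_zero] at hw
        simp [((deq0 N).1 hw).symm]
    | succ n ih =>
        have hsub : {w : P | dd N x0 w ≤ n+1} ⊆
            {w | dd N x0 w ≤ n} ∪
            ⋃ z ∈ {w : P | dd N x0 w ≤ n}, ⋃ L ∈ {L | L ∈ N.Lines ∧ z ∈ L}, L := by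
          intro w hw
          simp only [Set.mem_setOf_eq] at hw
          rcases Nat.lt_or_ge (dd N x0 w) (n+1) with h | h
          · exact Or.inl (Nat.lt_succ_iff.1 h)
          · have he : dd N x0 w = n + 1 := le_antisymm hw h
            obtain ⟨z, hz, hdz⟩ := pred_exists N he
            obtain ⟨-, L, hL, hzL, hwL⟩ := hz
            refine Or.inr ?_
            refine Set.mem_biUnion (show z ∈ {w : P | dd N x0 w ≤ n} by simp [hdz]) ?_
            exact Set.mem_biUnion (show L ∈ {L | L ∈ N.Lines ∧ z ∈ L} from ⟨hL, hzL⟩) hwL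
        refine ((ih.union ?_)).subset hsub
        exact ih.biUnion (fun z _ =>
          (lines_through_finite N hord z).biUnion (fun L hL => line_finite N hord hL.1))
  have huniv : (Set.univ : Set P).Finite := (hball 3).subset (fun w _ => N.diam_le x0 w)
  exact Set.finite_univ_iff.1 huniv

end Finiteness

section DoubleCount

/-- generic double count: if every fiber of `R` over `A` (via `fst`) has `k` elements,
then `R` has `k * |A|` elements. -/
lemma count_pairs_fst {α β : Type*} [Finite α] [Finite β] (R : Set (α × β)) (A : Set α)
    (k : ℕ) (hdom : ∀ w ∈ R, w.1 ∈ A) (hfib : ∀ a ∈ A, {b | (a, b) ∈ R}.ncard = k) :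
    R.ncard = k * A.ncard := by
  classical
  have hfib' : ∀ a ∈ A.toFinite.toFinset,
      (R.toFinite.toFinset.filter (fun w => w.1 = a)).card = k := by
    intro a ha
    have haA : a ∈ A := by simpa [Set.Finite.mem_toFinset] using ha
    have himg : ((R.toFinite.toFinset.filter (fun w => w.1 = a)).image Prod.snd)
        = {b | (a, b) ∈ R}.toFinite.toFinset := by
      ext b
      simp only [Finset.mem_image, Finset.mem_filter, Set.Finite.mem_toFinset, Set.mem_setOf_eq]
      constructor
      · rintro ⟨w, ⟨hwR, hw1⟩, hw2⟩
        rwa [← hw1, ← hw2, Prod.mk.eta]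
      · intro hb
        exact ⟨(a, b), ⟨hb, rfl⟩, rfl⟩
    have hinj : Set.InjOn Prod.snd
        ((R.toFinite.toFinset.filter (fun w => w.1 = a) : Finset (α × β)) : Set (α × β)) := by
      intro w1 h1 w2 h2 he
      simp only [Finset.coe_filter, Set.mem_setOf_eq] at h1 h2
      exact Prod.ext (h1.2.trans h2.2.symm) he
    calc (R.toFinite.toFinset.filter (fun w => w.1 = a)).card
        = ((R.toFinite.toFinset.filter (fun w => w.1 = a)).image Prod.snd).card :=
          (Finset.card_image_of_injOn hinj).symm
      _ = {b | (a, b) ∈ R}.toFinite.toFinset.card := by rw [himg]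
      _ = k := by rw [← Set.ncard_eq_toFinset_card]; exact hfib a haA
  rw [Set.ncard_eq_toFinset_card R R.toFinite, Set.ncard_eq_toFinset_card A A.toFinite]
  rw [Finset.card_eq_sum_card_fiberwise (f := Prod.fst) (t := A.toFinite.toFinset)
    (fun w hw => by simpa [Set.Finite.mem_toFinset] using hdom w (by
      simpa [Set.Finite.mem_toFinset] using hw))]
  rw [Finset.sum_congr rfl hfib', Finset.sum_const, smul_eq_mul, mul_comm]

lemma count_pairs_snd {α β : Type*} [Finite α] [Finite β] (R : Set (α × β)) (B : Set β)
    (k : ℕ) (hdom : ∀ w ∈ R, w.2 ∈ B) (hfib : ∀ b ∈ B, {a | (a, b) ∈ R}.ncard = k) :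
    R.ncard = k * B.ncard := by
  have hR : R.ncard = (Prod.swap '' R).ncard :=
    (Set.ncard_image_of_injective R Prod.swap_injective).symm
  rw [hR]
  refine count_pairs_fst (Prod.swap '' R) B k ?_ ?_
  · rintro w ⟨u, hu, rfl⟩
    exact hdom u hu
  · intro b hb
    have : {a | (b, a) ∈ Prod.swap '' R} = {a | (a, b) ∈ R} := by
      ext a
      constructor
      · rintro ⟨⟨u1, u2⟩, hu, he⟩
        rw [Prod.ext_iff] at he
        simp only [Prod.swap_prod_mk] at he
        obtain ⟨h1, h2⟩ := he
        subst h1; subst h2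
        exact hu
      · intro ha
        exact ⟨(a, b), ha, rfl⟩
    rw [this]
    exact hfib b hb

end DoubleCount

section SmallCards

lemma ncard3' {α : Type*} {a b c : α} (hab : a ≠ b) (hac : a ≠ c) (hbc : b ≠ c) :
    ({a, b, c} : Set α).ncard = 3 :=
  Set.ncard_eq_three.2 ⟨a, b, c, hab, hac, hbc, rfl⟩

lemma ncard4' {α : Type*} {a b c e : α} (h1 : a ≠ b) (h2 : a ≠ c) (h3 : a ≠ e)
    (h4 : b ≠ c) (h5 : b ≠ e) (h6 : c ≠ e) : ({a, b, c, e} : Set α).ncard = 4 := by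
  rw [Set.ncard_insert_of_notMem (by simp [h1, h2, h3])
      (((Set.finite_singleton e).insert c).insert b), ncard3' h4 h5 h6]

end SmallCards

section Counting
variable (N : NearPolygon P 3)

/-- write a line as `{p, u, v}` given `p ∈ L` -/
lemma line_minus (hord : N.hasOrder 2 2) {L : Set P} {p : P} (hL : L ∈ N.Lines)
    (hp : p ∈ L) : ∃ u v, u ≠ v ∧ p ≠ u ∧ p ≠ v ∧ L = {p, u, v} := by
  obtain ⟨a, b, c, hab, hac, hbc, rfl⟩ := line_rep N hord hL
  rcases (by simpa using hp : p = a ∨ p = b ∨ p = c) with rfl | rfl | rfl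
  · exact ⟨b, c, hbc, hab, hac, rfl⟩
  · exact ⟨a, c, hac, hab.symm, hbc, by ext w; simp; tauto⟩
  · exact ⟨a, b, hab, hac.symm, hbc.symm, by ext w; simp; tauto⟩

/-- the three lines through a point, in convenient form -/
lemma three_lines (hord : N.hasOrder 2 2) (e : P) :
    ∃ M1 M2 M3 : Set P, M1 ≠ M2 ∧ M1 ≠ M3 ∧ M2 ≠ M3 ∧
      (M1 ∈ N.Lines ∧ e ∈ M1) ∧ (M2 ∈ N.Lines ∧ e ∈ M2) ∧ (M3 ∈ N.Lines ∧ e ∈ M3) ∧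
      (∀ M, M ∈ N.Lines → e ∈ M → M = M1 ∨ M = M2 ∨ M = M3) := by
  have h3 : {M | M ∈ N.Lines ∧ e ∈ M}.ncard = 3 := hord.2 e
  obtain ⟨M1, M2, M3, h12, h13, h23, hMrep⟩ := Set.ncard_eq_three.1 h3
  have hMem : ∀ M, (M ∈ N.Lines ∧ e ∈ M) ↔ (M = M1 ∨ M = M2 ∨ M = M3) := by
    intro M
    constructor
    · intro hM
      have : M ∈ {M | M ∈ N.Lines ∧ e ∈ M} := hM
      rw [hMrep] at this; simpa using this
    · intro hM
      have : M ∈ ({M1, M2, M3} : Set (Set P)) := by simpa using hM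
      rw [← hMrep] at this; exact this
  exact ⟨M1, M2, M3, h12, h13, h23, (hMem M1).2 (Or.inl rfl), (hMem M2).2 (Or.inr (Or.inl rfl)),
    (hMem M3).2 (Or.inr (Or.inr rfl)), fun M hM heM => (hMem M).1 ⟨hM, heM⟩⟩

/-- the two lines through `e` missing an adjacent point `p` -/
lemma two_lines_off (hord : N.hasOrder 2 2) {p e : P} {L0 : Set P} (hL0 : L0 ∈ N.Lines)
    (hpL0 : p ∈ L0) (heL0 : e ∈ L0) (hne : p ≠ e) :
    ∃ Ma Mb : Set P, Ma ≠ Mb ∧ Ma ≠ L0 ∧ Mb ≠ L0 ∧ (Ma ∈ N.Lines ∧ e ∈ Ma) ∧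
      (Mb ∈ N.Lines ∧ e ∈ Mb) ∧ p ∉ Ma ∧ p ∉ Mb ∧
      (∀ M, M ∈ N.Lines → e ∈ M → M = L0 ∨ M = Ma ∨ M = Mb) := by
  obtain ⟨M1, M2, M3, h12, h13, h23, hM1, hM2, hM3, hcov⟩ := three_lines N hord e
  have hponly : ∀ M, M ∈ N.Lines → e ∈ M → p ∈ M → M = L0 := by
    intro M hM heM hpM
    exact line_unique' N hM hL0 hne hpM heM hpL0 heL0
  have hL0mem : L0 = M1 ∨ L0 = M2 ∨ L0 = M3 := hcov L0 hL0 heL0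
  have hrest : ∀ Ma Mb : Set P, Ma ≠ Mb ∧ Ma ≠ L0 ∧ Mb ≠ L0 ∧ (Ma ∈ N.Lines ∧ e ∈ Ma) ∧
      (Mb ∈ N.Lines ∧ e ∈ Mb) ∧ (∀ M, M ∈ N.Lines → e ∈ M → M = L0 ∨ M = Ma ∨ M = Mb) →
      ∃ Ma Mb : Set P, Ma ≠ Mb ∧ Ma ≠ L0 ∧ Mb ≠ L0 ∧ (Ma ∈ N.Lines ∧ e ∈ Ma) ∧
      (Mb ∈ N.Lines ∧ e ∈ Mb) ∧ p ∉ Ma ∧ p ∉ Mb ∧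
      (∀ M, M ∈ N.Lines → e ∈ M → M = L0 ∨ M = Ma ∨ M = Mb) := by
    rintro Ma Mb ⟨hab, haL, hbL, ha, hb, hc⟩
    exact ⟨Ma, Mb, hab, haL, hbL, ha, hb,
      fun hp => haL (hponly Ma ha.1 ha.2 hp), fun hp => hbL (hponly Mb hb.1 hb.2 hp), hc⟩
  rcases hL0mem with rfl | rfl | rfl
  · exact hrest M2 M3 ⟨h23, h12.symm, h13.symm, hM2, hM3,
      fun M hM heM => by have := hcov M hM heM; tauto⟩
  · exact hrest M1 M3 ⟨h13, h12, h23.symm, hM1, hM3,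
      fun M hM heM => by have := hcov M hM heM; tauto⟩
  · exact hrest M1 M2 ⟨h12, h13, h23, hM1, hM2,
      fun M hM heM => by have := hcov M hM heM; tauto⟩

/-- the unique line through two adjacent points -/
lemma unique_line_card (hord : N.hasOrder 2 2) {p e : P} (h : adj N p e) :
    {L | (L ∈ N.Lines ∧ p ∈ L) ∧ e ∈ L}.ncard = 1 := by
  obtain ⟨hne, L0, hL0, hpL0, heL0⟩ := h
  rw [Set.ncard_eq_one]
  refine ⟨L0, ?_⟩
  ext L
  simp only [Set.mem_setOf_eq, Set.mem_singleton_iff]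
  constructor
  · rintro ⟨⟨hL, hpL⟩, heL⟩
    exact line_unique' N hL hL0 hne hpL heL hpL0 heL0
  · rintro rfl
    exact ⟨⟨hL0, hpL0⟩, heL0⟩

lemma n1_eq (hord : N.hasOrder 2 2) (p : P) : {e | dd N p e = 1}.ncard = 6 := by
  haveI : Finite P := finiteP N hord
  have h1 : {w : P × Set P | dd N p w.1 = 1 ∧ (w.2 ∈ N.Lines ∧ p ∈ w.2) ∧ w.1 ∈ w.2}.ncard
      = 1 * {e | dd N p e = 1}.ncard := by
    refine count_pairs_fst _ _ 1 (fun w hw => hw.1) ?_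
    intro e he
    simp only [Set.mem_setOf_eq] at he
    have hadj : adj N p e := (d1adj N).1 he
    have hconv : {b | (e, b) ∈
        {w : P × Set P | dd N p w.1 = 1 ∧ (w.2 ∈ N.Lines ∧ p ∈ w.2) ∧ w.1 ∈ w.2}}
        = {L | (L ∈ N.Lines ∧ p ∈ L) ∧ e ∈ L} := by
      ext L; simp only [Set.mem_setOf_eq]; tauto
    rw [hconv]
    exact unique_line_card N hord hadj
  have h2 : {w : P × Set P | dd N p w.1 = 1 ∧ (w.2 ∈ N.Lines ∧ p ∈ w.2) ∧ w.1 ∈ w.2}.ncard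
      = 2 * {L | L ∈ N.Lines ∧ p ∈ L}.ncard := by
    refine count_pairs_snd _ _ 2 (fun w hw => hw.2.1) ?_
    rintro L ⟨hL, hpL⟩
    obtain ⟨u, v, huv, hpu, hpv, hrep⟩ := line_minus N hord hL hpL
    have hconv : {a | (a, L) ∈
        {w : P × Set P | dd N p w.1 = 1 ∧ (w.2 ∈ N.Lines ∧ p ∈ w.2) ∧ w.1 ∈ w.2}}
        = {u, v} := by
      ext z
      simp only [Set.mem_setOf_eq, Set.mem_insert_iff, Set.mem_singleton_iff]
      constructor
      · rintro ⟨hdz, -, hzL⟩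
        rcases (by rw [hrep] at hzL; simpa using hzL : z = p ∨ z = u ∨ z = v) with rfl | h | h
        · rw [dself] at hdz; omega
        · tauto
        · tauto
      · rintro (rfl | rfl)
        · exact ⟨mem_line_dist N hL hpL (by rw [hrep]; simp) (Ne.symm hpu), ⟨hL, hpL⟩,
            by rw [hrep]; simp⟩
        · exact ⟨mem_line_dist N hL hpL (by rw [hrep]; simp) (Ne.symm hpv), ⟨hL, hpL⟩,
            by rw [hrep]; simp⟩
    rw [hconv]
    exact Set.ncard_pair huv
  have h3 : {L | L ∈ N.Lines ∧ p ∈ L}.ncard = 3 := hord.2 p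
  omega

lemma nlines_eq (hord : N.hasOrder 2 2) : N.Lines.ncard = Nat.card P := by
  haveI : Finite P := finiteP N hord
  have h1 : {w : P × Set P | w.2 ∈ N.Lines ∧ w.1 ∈ w.2}.ncard
      = 3 * (Set.univ : Set P).ncard := by
    refine count_pairs_fst _ _ 3 (fun w _ => Set.mem_univ _) ?_
    intro z _
    have hconv : {b | (z, b) ∈ {w : P × Set P | w.2 ∈ N.Lines ∧ w.1 ∈ w.2}}
        = {L | L ∈ N.Lines ∧ z ∈ L} := by
      ext L; simp only [Set.mem_setOf_eq]
    rw [hconv]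
    have := hord.2 z; omega
  have h2 : {w : P × Set P | w.2 ∈ N.Lines ∧ w.1 ∈ w.2}.ncard = 3 * N.Lines.ncard := by
    refine count_pairs_snd _ _ 3 (fun w hw => hw.1) ?_
    intro L hL
    have hconv : {a | (a, L) ∈ {w : P × Set P | w.2 ∈ N.Lines ∧ w.1 ∈ w.2}}
        = {z | z ∈ L} := by
      ext z; simp only [Set.mem_setOf_eq]; tauto
    rw [hconv]
    have := hord.1 L hL
    have he : {z | z ∈ L} = L := rfl
    rw [he]; omega
  rw [h1, Set.ncard_univ] at h2
  omega

/-- lines disjoint from the ball of radius 1 around `p` -/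
def T2 (N : NearPolygon P 3) (p : P) : Set (Set P) :=
  {L | L ∈ N.Lines ∧ p ∉ L ∧ ∀ z ∈ L, dd N p z ≠ 1}

/-- lines through a neighbour of `p`, missing `p` -/
def T1 (N : NearPolygon P 3) (p : P) : Set (Set P) :=
  {L | L ∈ N.Lines ∧ p ∉ L ∧ ∃ e ∈ L, dd N p e = 1}

lemma t1_struct {p z e : P} {L : Set P} (hL : L ∈ N.Lines) (hpL : p ∉ L) (heL : e ∈ L)
    (hde : dd N p e = 1) (hzL : z ∈ L) (hze : z ≠ e) : dd N p z = 2 := by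
  obtain ⟨m, hm, hspec⟩ := near_pattern N p hL
  by_cases hem : e = m
  · subst hem
    rw [hspec z hzL hze, hde]
  · have h1 := hspec e heL hem
    have h2 : dd N p m = 0 := by omega
    exact absurd (((deq0 N).1 h2) ▸ hm) hpL

lemma t2_struct {p : P} {L : Set P} (hL : L ∈ N.Lines) (hpL : p ∉ L)
    (hno : ∀ z ∈ L, dd N p z ≠ 1) : ∃ m ∈ L, dd N p m = 2 ∧ ∀ z ∈ L, z ≠ m → dd N p z = 3 := by
  obtain ⟨m, hm, hspec⟩ := near_pattern N p hL
  obtain ⟨x1, hx1, x2, hx2, hx12⟩ := N.two_pts L hL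
  have hm0 : dd N p m ≠ 0 := fun h => hpL (((deq0 N).1 h) ▸ hm)
  have hm1 : dd N p m ≠ 1 := hno m hm
  have hother : ∃ z ∈ L, z ≠ m := by
    by_cases h : x1 = m
    · exact ⟨x2, hx2, by rw [← h]; exact Ne.symm hx12⟩
    · exact ⟨x1, hx1, h⟩
  obtain ⟨z0, hz0, hz0m⟩ := hother
  have h3 := hspec z0 hz0 hz0m
  have h4 : dd N p z0 ≤ 3 := ddiam N
  have hm2 : dd N p m = 2 := by omega
  exact ⟨m, hm, hm2, fun z hz hzm => by rw [hspec z hz hzm, hm2]⟩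

lemma t2_nonempty {p q : P} (hord : N.hasOrder 2 2) (h : dd N p q = 3) :
    (T2 N p).Nonempty := by
  have h3 : {L | L ∈ N.Lines ∧ q ∈ L}.ncard = 3 := hord.2 q
  have hne : {L | L ∈ N.Lines ∧ q ∈ L}.Nonempty := by
    rw [← Set.ncard_pos (lines_through_finite N hord q)] at *; omega
  obtain ⟨L, hL, hqL⟩ := hne
  refine ⟨L, hL, ?_, ?_⟩
  · intro hpL
    by_cases hqp : q = p
    · rw [hqp, dself] at h; omega
    · have := mem_line_dist N hL hpL hqL hqp; omega
  · intro z hz h1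
    by_cases hzq : z = q
    · rw [hzq, h] at h1; omega
    · have : dd N p q ≤ dd N p z + 1 :=
        dist_le_add1 N (adj_of_line N hL hz hqL hzq)
      omega

lemma lines_split (hord : N.hasOrder 2 2) (p : P) :
    N.Lines.ncard = 3 + (T1 N p).ncard + (T2 N p).ncard := by
  haveI : Finite P := finiteP N hord
  have hsplit : N.Lines = {L | L ∈ N.Lines ∧ p ∈ L} ∪ T1 N p ∪ T2 N p := by
    ext L
    simp only [T1, T2, Set.mem_union, Set.mem_setOf_eq]
    constructor
    · intro hL
      by_cases hp : p ∈ L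
      · exact Or.inl (Or.inl ⟨hL, hp⟩)
      · by_cases he : ∃ e ∈ L, dd N p e = 1
        · exact Or.inl (Or.inr ⟨hL, hp, he⟩)
        · exact Or.inr ⟨hL, hp, fun z hz h1 => he ⟨z, hz, h1⟩⟩
    · rintro ((h | h) | h) <;> exact h.1
  have hd1 : Disjoint ({L | L ∈ N.Lines ∧ p ∈ L} ∪ T1 N p) (T2 N p) := by
    rw [Set.disjoint_left]
    rintro L (⟨-, hpL⟩ | ⟨-, -, e, heL, he⟩) ⟨-, hnp, hno⟩
    · exact hnp hpL
    · exact hno e heL he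
  have hd0 : Disjoint {L | L ∈ N.Lines ∧ p ∈ L} (T1 N p) := by
    rw [Set.disjoint_left]
    rintro L ⟨-, hpL⟩ ⟨-, hnp, -⟩
    exact hnp hpL
  have hone : ({L | L ∈ N.Lines ∧ p ∈ L} ∪ T1 N p ∪ T2 N p).ncard
      = 3 + (T1 N p).ncard + (T2 N p).ncard := by
    rw [Set.ncard_union_eq hd1 ((Set.toFinite _).union (Set.toFinite _)) (Set.toFinite _),
      Set.ncard_union_eq hd0 (Set.toFinite _) (Set.toFinite _), hord.2 p]
  rw [hsplit, hone]

lemma t1_card (hord : N.hasOrder 2 2) (p : P) : (T1 N p).ncard = 12 := by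
  haveI : Finite P := finiteP N hord
  have hR : {w : P × Set P | dd N p w.1 = 1 ∧ w.2 ∈ T1 N p ∧ w.1 ∈ w.2}.ncard
      = 2 * {e | dd N p e = 1}.ncard := by
    refine count_pairs_fst _ _ 2 (fun w hw => hw.1) ?_
    intro e he
    simp only [Set.mem_setOf_eq] at he
    obtain ⟨hne, L0, hL0, hpL0, heL0⟩ := (d1adj N).1 he
    obtain ⟨Ma, Mb, hMab, hMaL0, hMbL0, hMa, hMb, hpMa, hpMb, hcov⟩ :=
      two_lines_off N hord hL0 hpL0 heL0 hne
    have hconv : {b | (e, b) ∈ {w : P × Set P | dd N p w.1 = 1 ∧ w.2 ∈ T1 N p ∧ w.1 ∈ w.2}}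
        = {Ma, Mb} := by
      ext M
      simp only [Set.mem_setOf_eq, T1, Set.mem_insert_iff, Set.mem_singleton_iff]
      constructor
      · rintro ⟨-, ⟨hM, hpM, -⟩, heM⟩
        rcases hcov M hM heM with rfl | rfl | rfl
        · exact absurd hpL0 hpM
        · exact Or.inl rfl
        · exact Or.inr rfl
      · rintro (rfl | rfl)
        · exact ⟨he, ⟨hMa.1, hpMa, ⟨e, hMa.2, he⟩⟩, hMa.2⟩
        · exact ⟨he, ⟨hMb.1, hpMb, ⟨e, hMb.2, he⟩⟩, hMb.2⟩
    rw [hconv]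
    exact Set.ncard_pair hMab
  have hR' : {w : P × Set P | dd N p w.1 = 1 ∧ w.2 ∈ T1 N p ∧ w.1 ∈ w.2}.ncard
      = 1 * (T1 N p).ncard := by
    refine count_pairs_snd _ _ 1 (fun w hw => hw.2.1) ?_
    intro L hLA1
    simp only [T1, Set.mem_setOf_eq] at hLA1
    obtain ⟨hL, hpL, e0, he0L, he0⟩ := hLA1
    have hconv : {a | (a, L) ∈ {w : P × Set P | dd N p w.1 = 1 ∧ w.2 ∈ T1 N p ∧ w.1 ∈ w.2}}
        = {e0} := by
      ext z
      simp only [Set.mem_setOf_eq, Set.mem_singleton_iff]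
      constructor
      · rintro ⟨hz1, -, hzL⟩
        by_contra hne
        have := t1_struct N hL hpL he0L he0 hzL hne
        omega
      · rintro rfl
        exact ⟨he0, ⟨hL, hpL, _, he0L, he0⟩, he0L⟩
    rw [hconv]
    exact Set.ncard_singleton e0
  rw [hR', n1_eq N hord p] at hR
  omega

lemma lines_partition (hord : N.hasOrder 2 2) (p : P) :
    N.Lines.ncard = 15 + (T2 N p).ncard := by
  have := lines_split N hord p
  rw [t1_card N hord p] at this
  omega

lemma count_gamma2 (hord : N.hasOrder 2 2) (p : P) :
    3 * {z | dd N p z = 2}.ncard = 24 + (T2 N p).ncard := by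
  haveI : Finite P := finiteP N hord
  have h1 : {w : P × Set P | dd N p w.1 = 2 ∧ w.2 ∈ N.Lines ∧ w.1 ∈ w.2}.ncard
      = 3 * {z | dd N p z = 2}.ncard := by
    refine count_pairs_fst _ _ 3 (fun w hw => hw.1) ?_
    intro z hz
    simp only [Set.mem_setOf_eq] at hz
    have hconv : {b | (z, b) ∈ {w : P × Set P | dd N p w.1 = 2 ∧ w.2 ∈ N.Lines ∧ w.1 ∈ w.2}}
        = {L | L ∈ N.Lines ∧ z ∈ L} := by
      ext L; simp only [Set.mem_setOf_eq]; tauto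
    rw [hconv]
    have := hord.2 z; omega
  have hsplit : {w : P × Set P | dd N p w.1 = 2 ∧ w.2 ∈ N.Lines ∧ w.1 ∈ w.2}
      = {w : P × Set P | (dd N p w.1 = 2 ∧ w.1 ∈ w.2) ∧ w.2 ∈ T1 N p}
      ∪ {w : P × Set P | (dd N p w.1 = 2 ∧ w.1 ∈ w.2) ∧ w.2 ∈ T2 N p} := by
    ext w
    simp only [Set.mem_union, Set.mem_setOf_eq, T1, T2]
    constructor
    · rintro ⟨hd2, hL, hwL⟩
      by_cases hp : p ∈ w.2
      · exfalso
        by_cases hzp : w.1 = p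
        · rw [hzp, dself] at hd2; omega
        · have := mem_line_dist N hL hp hwL hzp; omega
      · by_cases he : ∃ e ∈ w.2, dd N p e = 1
        · exact Or.inl ⟨⟨hd2, hwL⟩, hL, hp, he⟩
        · exact Or.inr ⟨⟨hd2, hwL⟩, hL, hp, fun z hz h1 => he ⟨z, hz, h1⟩⟩
    · rintro (⟨⟨hd2, hwL⟩, hL, -⟩ | ⟨⟨hd2, hwL⟩, hL, -⟩) <;> exact ⟨hd2, hL, hwL⟩
  have hdisj : Disjoint {w : P × Set P | (dd N p w.1 = 2 ∧ w.1 ∈ w.2) ∧ w.2 ∈ T1 N p}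
      {w : P × Set P | (dd N p w.1 = 2 ∧ w.1 ∈ w.2) ∧ w.2 ∈ T2 N p} := by
    rw [Set.disjoint_left]
    rintro w ⟨-, -, -, e, heL, he⟩ ⟨-, -, -, hno⟩
    exact hno e heL he
  have hR1card : {w : P × Set P | (dd N p w.1 = 2 ∧ w.1 ∈ w.2) ∧ w.2 ∈ T1 N p}.ncard
      = 2 * (T1 N p).ncard := by
    refine count_pairs_snd _ _ 2 (fun w hw => hw.2) ?_
    rintro L ⟨hL, hpL, e0, he0L, he0⟩
    obtain ⟨u, v, huv, heu, hev, hrep⟩ := line_minus N hord hL he0L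
    have hconv : {a | (a, L) ∈
        {w : P × Set P | (dd N p w.1 = 2 ∧ w.1 ∈ w.2) ∧ w.2 ∈ T1 N p}} = {u, v} := by
      ext z
      simp only [Set.mem_setOf_eq, Set.mem_insert_iff, Set.mem_singleton_iff]
      constructor
      · rintro ⟨⟨hdz, hzL⟩, -⟩
        rcases (by rw [hrep] at hzL; simpa using hzL : z = e0 ∨ z = u ∨ z = v) with rfl | h | h
        · omega
        · tauto
        · tauto
      · rintro (rfl | rfl)
        · exact ⟨⟨t1_struct N hL hpL he0L he0 (by rw [hrep]; simp) (Ne.symm heu),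
            by rw [hrep]; simp⟩, hL, hpL, e0, he0L, he0⟩
        · exact ⟨⟨t1_struct N hL hpL he0L he0 (by rw [hrep]; simp) (Ne.symm hev),
            by rw [hrep]; simp⟩, hL, hpL, e0, he0L, he0⟩
    rw [hconv]
    exact Set.ncard_pair huv
  have hR2card : {w : P × Set P | (dd N p w.1 = 2 ∧ w.1 ∈ w.2) ∧ w.2 ∈ T2 N p}.ncard
      = 1 * (T2 N p).ncard := by
    refine count_pairs_snd _ _ 1 (fun w hw => hw.2) ?_
    rintro L hLT2
    obtain ⟨hL, hpL, hno⟩ := hLT2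
    obtain ⟨m, hmL, hm2, hm3⟩ := t2_struct N hL hpL hno
    have hconv : {a | (a, L) ∈
        {w : P × Set P | (dd N p w.1 = 2 ∧ w.1 ∈ w.2) ∧ w.2 ∈ T2 N p}} = {m} := by
      ext z
      simp only [Set.mem_setOf_eq, Set.mem_singleton_iff]
      constructor
      · rintro ⟨⟨hdz, hzL⟩, -⟩
        by_contra hne
        have := hm3 z hzL hne
        omega
      · rintro rfl
        exact ⟨⟨hm2, hmL⟩, hL, hpL, hno⟩
    rw [hconv]
    exact Set.ncard_singleton m
  have hfinal : {w : P × Set P | dd N p w.1 = 2 ∧ w.2 ∈ N.Lines ∧ w.1 ∈ w.2}.ncard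
      = 2 * (T1 N p).ncard + 1 * (T2 N p).ncard := by
    rw [hsplit, Set.ncard_union_eq hdisj (Set.toFinite _) (Set.toFinite _), hR1card, hR2card]
  rw [h1, t1_card N hord p] at hfinal
  omega

lemma mu_pos {p z : P} (h : dd N p z = 2) : ∃ e, dd N p e = 1 ∧ adj N e z := by
  obtain ⟨e, he1, he2⟩ := pred_exists N (show dd N p z = 1 + 1 from h)
  exact ⟨e, he2, he1⟩

lemma E12_eq (hord : N.hasOrder 2 2) (p : P) :
    {w : P × P | dd N p w.1 = 1 ∧ dd N p w.2 = 2 ∧ adj N w.1 w.2}.ncard = 24 := by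
  haveI : Finite P := finiteP N hord
  have h1 : {w : P × P | dd N p w.1 = 1 ∧ dd N p w.2 = 2 ∧ adj N w.1 w.2}.ncard
      = 4 * {e | dd N p e = 1}.ncard := by
    refine count_pairs_fst _ _ 4 (fun w hw => hw.1) ?_
    intro e he
    simp only [Set.mem_setOf_eq] at he
    obtain ⟨hne, L0, hL0, hpL0, heL0⟩ := (d1adj N).1 he
    obtain ⟨Ma, Mb, hMab, hMaL0, hMbL0, hMa, hMb, hpMa, hpMb, hcov⟩ :=
      two_lines_off N hord hL0 hpL0 heL0 hne
    obtain ⟨s, t, hst, hes, het, hrepa⟩ := line_minus N hord hMa.1 hMa.2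
    obtain ⟨s', t', hst', hes', het', hrepb⟩ := line_minus N hord hMb.1 hMb.2
    have hcross : ∀ z : P, z ∈ Ma → z ∈ Mb → z = e := by
      intro z hza hzb
      by_contra hzne
      exact hMab (line_unique' N hMa.1 hMb.1 (Ne.symm hzne) hMa.2 hza hMb.2 hzb)
    have hconv : {b | (e, b) ∈
        {w : P × P | dd N p w.1 = 1 ∧ dd N p w.2 = 2 ∧ adj N w.1 w.2}} = {s, t, s', t'} := by
      ext z
      simp only [Set.mem_setOf_eq, Set.mem_insert_iff, Set.mem_singleton_iff]
      constructor
      · rintro ⟨-, hdz, hadj⟩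
        obtain ⟨hzne, M, hM, heM, hzM⟩ := hadj
        rcases hcov M hM heM with rfl | rfl | rfl
        · exfalso
          by_cases hzp : z = p
          · rw [hzp, dself] at hdz; omega
          · have := mem_line_dist N hM hpL0 hzM hzp; omega
        · rcases (by rw [hrepa] at hzM; simpa using hzM : z = e ∨ z = s ∨ z = t) with rfl | h | h
          · exact absurd rfl hzne
          · tauto
          · tauto
        · rcases (by rw [hrepb] at hzM; simpa using hzM : z = e ∨ z = s' ∨ z = t')
            with rfl | h | h
          · exact absurd rfl hzne
          · tauto
          · tauto
      · have hmem : ∀ z, z ∈ Ma → z ≠ e → dd N p e = 1 ∧ dd N p z = 2 ∧ adj N e z := by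
          intro z hz hzne
          exact ⟨he, t1_struct N hMa.1 hpMa hMa.2 he hz hzne,
            adj_of_line N hMa.1 hMa.2 hz (Ne.symm hzne)⟩
        have hmem' : ∀ z, z ∈ Mb → z ≠ e → dd N p e = 1 ∧ dd N p z = 2 ∧ adj N e z := by
          intro z hz hzne
          exact ⟨he, t1_struct N hMb.1 hpMb hMb.2 he hz hzne,
            adj_of_line N hMb.1 hMb.2 hz (Ne.symm hzne)⟩
        rintro (rfl | rfl | rfl | rfl)
        · exact hmem z (by rw [hrepa]; simp) (Ne.symm hes)
        · exact hmem z (by rw [hrepa]; simp) (Ne.symm het)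
        · exact hmem' z (by rw [hrepb]; simp) (Ne.symm hes')
        · exact hmem' z (by rw [hrepb]; simp) (Ne.symm het')
    rw [hconv]
    have hmemMa : s ∈ Ma ∧ t ∈ Ma := by rw [hrepa]; exact ⟨by simp, by simp⟩
    have hmemMb : s' ∈ Mb ∧ t' ∈ Mb := by rw [hrepb]; exact ⟨by simp, by simp⟩
    have hss' : s ≠ s' := fun h => hes' (by rw [← h]; exact (hcross s hmemMa.1 (h ▸ hmemMb.1)).symm)
    have hst'2 : s ≠ t' := fun h => het' (by rw [← h]; exact (hcross s hmemMa.1 (h ▸ hmemMb.2)).symm)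
    have hts' : t ≠ s' := fun h => hes' (by rw [← h]; exact (hcross t hmemMa.2 (h ▸ hmemMb.1)).symm)
    have htt' : t ≠ t' := fun h => het' (by rw [← h]; exact (hcross t hmemMa.2 (h ▸ hmemMb.2)).symm)
    exact ncard4' hst hss' hst'2 hts' htt' hst'
  rw [n1_eq N hord p] at h1
  omega

end Counting

section ChaseHelpers
variable (N : NearPolygon P 3)

lemma line_eq_of_three (hord : N.hasOrder 2 2) {L : Set P} {u v w : P} (hL : L ∈ N.Lines)
    (hu : u ∈ L) (hv : v ∈ L) (hw : w ∈ L) (huv : u ≠ v) (huw : u ≠ w) (hvw : v ≠ w) :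
    L = {u, v, w} := by
  have hsub : ({u, v, w} : Set P) ⊆ L := by
    rintro z (rfl | rfl | rfl) <;> assumption
  have hcard : L.ncard ≤ ({u, v, w} : Set P).ncard := by
    rw [hord.1 L hL, ncard3' huv huw hvw]
  exact (Set.eq_of_subset_of_ncard_le hsub hcard (line_finite N hord hL)).symm

/-- two points at distance 2 on a line force adjacency with the third -/
lemma two_two (hord : N.hasOrder 2 2) {L : Set P} {u v w p : P} (hL : L ∈ N.Lines)
    (hu : u ∈ L) (hv : v ∈ L) (hw : w ∈ L) (huv : u ≠ v) (huw : u ≠ w) (hvw : v ≠ w)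
    (h1 : dd N p u = 2) (h2 : dd N p v = 2) : adj N p w := by
  have hrep := line_eq_of_three N hord hL hu hv hw huv huw hvw
  have h3 := forces N hL hrep huv huw hvw h1 h2
  exact (d1adj N).1 (by omega)

/-- two points at distance 1 on a line force the third to be the point itself -/
lemma one_one (hord : N.hasOrder 2 2) {L : Set P} {u v w p : P} (hL : L ∈ N.Lines)
    (hu : u ∈ L) (hv : v ∈ L) (hw : w ∈ L) (huv : u ≠ v) (huw : u ≠ w) (hvw : v ≠ w)
    (h1 : dd N p u = 1) (h2 : dd N p v = 1) : p = w := by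
  have hrep := line_eq_of_three N hord hL hu hv hw huv huw hvw
  have h3 := forces N hL hrep huv huw hvw h1 h2
  exact (deq0 N).1 (by omega)

/-- distance 1 and distance 2 on a line force the third to distance 2 -/
lemma one_two (hord : N.hasOrder 2 2) {L : Set P} {u v w p : P} (hL : L ∈ N.Lines)
    (hu : u ∈ L) (hv : v ∈ L) (hw : w ∈ L) (huv : u ≠ v) (huw : u ≠ w) (hvw : v ≠ w)
    (h1 : dd N p u = 1) (h2 : dd N p v = 2) : dd N p w = 2 := by
  have hrep := line_eq_of_three N hord hL hu hv hw huv huw hvw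
  exact forces2 N hL hrep huv huw hvw h1 h2

lemma third_point (hord : N.hasOrder 2 2) {u v : P} (h : adj N u v) :
    ∃ L w, L ∈ N.Lines ∧ u ∈ L ∧ v ∈ L ∧ w ∈ L ∧ w ≠ u ∧ w ≠ v := by
  obtain ⟨hne, L, hL, huL, hvL⟩ := h
  obtain ⟨w, hwu, hwv, hrep⟩ := line_rep_pair N hord hL huL hvL hne
  exact ⟨L, w, hL, huL, hvL, by rw [hrep]; simp, hwu, hwv⟩

lemma ne_of_dist {p u v : P} {j k : ℕ} (h1 : dd N p u = j) (h2 : dd N p v = k)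
    (hjk : j ≠ k) : u ≠ v := by
  intro h
  rw [h] at h1
  rw [h1] at h2
  exact hjk h2

lemma ne_pts_of_lines {L M : Set P} {x u v : P} (hL : L ∈ N.Lines) (hM : M ∈ N.Lines)
    (hLM : L ≠ M) (hxL : x ∈ L) (hxM : x ∈ M) (huL : u ∈ L) (hvM : v ∈ M)
    (hux : u ≠ x) : u ≠ v := by
  intro h
  subst h
  exact hLM (line_unique' N hL hM (Ne.symm hux) hxL huL hxM hvM)

lemma nbrs_via_lines (hord : N.hasOrder 2 2) {z : P} {L1 L2 L3 : Set P}
    (h1 : L1 ∈ N.Lines) (h2 : L2 ∈ N.Lines) (h3 : L3 ∈ N.Lines)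
    (hz1 : z ∈ L1) (hz2 : z ∈ L2) (hz3 : z ∈ L3)
    (h12 : L1 ≠ L2) (h13 : L1 ≠ L3) (h23 : L2 ≠ L3) :
    ∀ w, adj N z w → w ∈ L1 ∨ w ∈ L2 ∨ w ∈ L3 := by
  intro w hw
  obtain ⟨hne, L, hL, hzL, hwL⟩ := hw
  rcases lines_through_eq N hord h1 h2 h3 hz1 hz2 hz3 h12 h13 h23 L hL hzL
    with rfl | rfl | rfl
  · exact Or.inl hwL
  · exact Or.inr (Or.inl hwL)
  · exact Or.inr (Or.inr hwL)

lemma dist2_via {u v w : P} (h1 : adj N u w) (h2 : adj N w v) (hne : u ≠ v)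
    (hnadj : ¬ adj N u v) : dd N u v = 2 := by
  refine dist2 N hne hnadj ?_
  have := dtri N u w v
  have e1 : dd N u w = 1 := (d1adj N).2 h1
  have e2 : dd N w v = 1 := (d1adj N).2 h2
  omega

lemma ne_line_of {L M : Set P} {u : P} (hu : u ∈ L) (hnu : u ∉ M) : L ≠ M :=
  fun h => hnu (h ▸ hu)

end ChaseHelpers

section MuTwo
variable (N : NearPolygon P 3)

set_option maxHeartbeats 2000000 in
lemma mu_le_two_aux (hord : N.hasOrder 2 2) {x y a b c : P}
    (hxy : dd N x y = 2) (hab : a ≠ b) (hac : a ≠ c) (hbc : b ≠ c)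
    (hxa : adj N x a) (hay : adj N a y) (hxb : adj N x b) (hby : adj N b y)
    (hxc : adj N x c) (hcy : adj N c y) : False := by
  -- basic distance facts
  have dyx : dd N y x = 2 := by rw [dcomm]; exact hxy
  have dxa : dd N x a = 1 := (d1adj N).2 hxa
  have dxb : dd N x b = 1 := (d1adj N).2 hxb
  have dxc : dd N x c = 1 := (d1adj N).2 hxc
  have dya : dd N y a = 1 := (d1adj N).2 hay.symm
  have dyb : dd N y b = 1 := (d1adj N).2 hby.symm
  have dyc : dd N y c = 1 := (d1adj N).2 hcy.symm
  -- the six lines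
  obtain ⟨A, al, hA, hxA, haA, halA, halx, hala⟩ := third_point N hord hxa
  obtain ⟨B, be, hB, hxB, hbB, hbeB, hbex, hbeb⟩ := third_point N hord hxb
  obtain ⟨C, ga, hC, hxC, hcC, hgaC, hgax, hgac⟩ := third_point N hord hxc
  obtain ⟨A', alp, hA', haA', hyA', halpA', halpa, halpy⟩ := third_point N hord hay
  obtain ⟨B', bep, hB', hbB', hyB', hbepB', hbepb, hbepy⟩ := third_point N hord hby
  obtain ⟨C', gap, hC', hcC', hyC', hgapC', hgapc, hgapy⟩ := third_point N hord hcy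
  have dxal : dd N x al = 1 := mem_line_dist N hA hxA halA halx
  have dxbe : dd N x be = 1 := mem_line_dist N hB hxB hbeB hbex
  have dxga : dd N x ga = 1 := mem_line_dist N hC hxC hgaC hgax
  have daal : dd N a al = 1 := mem_line_dist N hA haA halA hala
  have dbbe : dd N b be = 1 := mem_line_dist N hB hbB hbeB hbeb
  have dcga : dd N c ga = 1 := mem_line_dist N hC hcC hgaC hgac
  have dyalp : dd N y alp = 1 := mem_line_dist N hA' hyA' halpA' halpy
  have dybep : dd N y bep = 1 := mem_line_dist N hB' hyB' hbepB' hbepy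
  have dygap : dd N y gap = 1 := mem_line_dist N hC' hyC' hgapC' hgapy
  have daalp : dd N a alp = 1 := mem_line_dist N hA' haA' halpA' halpa
  have dbbep : dd N b bep = 1 := mem_line_dist N hB' hbB' hbepB' hbepb
  have dcgap : dd N c gap = 1 := mem_line_dist N hC' hcC' hgapC' hgapc
  -- third points at distance two from the opposite end
  have dyal : dd N y al = 2 :=
    one_two N hord hA haA hxA halA hxa.ne.symm hala.symm halx.symm dya dyx
  have dybe : dd N y be = 2 :=
    one_two N hord hB hbB hxB hbeB hxb.ne.symm hbeb.symm hbex.symm dyb dyx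
  have dyga : dd N y ga = 2 :=
    one_two N hord hC hcC hxC hgaC hxc.ne.symm hgac.symm hgax.symm dyc dyx
  have dxalp : dd N x alp = 2 :=
    one_two N hord hA' haA' hyA' halpA' hay.ne halpa.symm halpy.symm dxa hxy
  have dxbep : dd N x bep = 2 :=
    one_two N hord hB' hbB' hyB' hbepB' hby.ne hbepb.symm hbepy.symm dxb hxy
  have dxgap : dd N x gap = 2 :=
    one_two N hord hC' hcC' hyC' hgapC' hcy.ne hgapc.symm hgapy.symm dxc hxy
  -- line distinctness through x and through y
  have hABrep : A = {x, a, al} := line_eq_of_three N hord hA hxA haA halA hxa.ne halx.symm hala.symm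
  have hBrep : B = {x, b, be} := line_eq_of_three N hord hB hxB hbB hbeB hxb.ne hbex.symm hbeb.symm
  have hCrep : C = {x, c, ga} := line_eq_of_three N hord hC hxC hcC hgaC hxc.ne hgax.symm hgac.symm
  have hA'rep : A' = {a, y, alp} :=
    line_eq_of_three N hord hA' haA' hyA' halpA' hay.ne halpa.symm halpy.symm
  have hB'rep : B' = {b, y, bep} :=
    line_eq_of_three N hord hB' hbB' hyB' hbepB' hby.ne hbepb.symm hbepy.symm
  have hC'rep : C' = {c, y, gap} :=
    line_eq_of_three N hord hC' hcC' hyC' hgapC' hcy.ne hgapc.symm hgapy.symm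
  have hAB : A ≠ B := by
    intro h
    have : b ∈ A := h ▸ hbB
    rw [hABrep] at this
    rcases (by simpa using this : b = x ∨ b = a ∨ b = al) with rfl | rfl | rfl
    · exact hxb.ne rfl
    · exact hab rfl
    · rw [dyal] at dyb; omega
  have hAC : A ≠ C := by
    intro h
    have : c ∈ A := h ▸ hcC
    rw [hABrep] at this
    rcases (by simpa using this : c = x ∨ c = a ∨ c = al) with rfl | rfl | rfl
    · exact hxc.ne rfl
    · exact hac rfl
    · rw [dyal] at dyc; omega
  have hBC : B ≠ C := by
    intro h
    have : c ∈ B := h ▸ hcC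
    rw [hBrep] at this
    rcases (by simpa using this : c = x ∨ c = b ∨ c = be) with rfl | rfl | rfl
    · exact hxc.ne rfl
    · exact hbc rfl
    · rw [dybe] at dyc; omega
  have hA'B' : A' ≠ B' := by
    intro h
    have : b ∈ A' := h ▸ hbB'
    rw [hA'rep] at this
    rcases (by simpa using this : b = a ∨ b = y ∨ b = alp) with rfl | rfl | rfl
    · exact hab rfl
    · exact hby.ne rfl
    · rw [dxalp] at dxb; omega
  have hA'C' : A' ≠ C' := by
    intro h
    have : c ∈ A' := h ▸ hcC'
    rw [hA'rep] at this
    rcases (by simpa using this : c = a ∨ c = y ∨ c = alp) with rfl | rfl | rfl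
    · exact hac rfl
    · exact hcy.ne rfl
    · rw [dxalp] at dxc; omega
  have hB'C' : B' ≠ C' := by
    intro h
    have : c ∈ B' := h ▸ hcC'
    rw [hB'rep] at this
    rcases (by simpa using this : c = b ∨ c = y ∨ c = bep) with rfl | rfl | rfl
    · exact hbc rfl
    · exact hcy.ne rfl
    · rw [dxbep] at dxc; omega
  -- non-adjacency and distance 2 for pairs on distinct lines through x
  have hxpair : ∀ {u v : P} {Lu Lv : Set P}, Lu ∈ N.Lines → Lv ∈ N.Lines → x ∈ Lu → x ∈ Lv →
      u ∈ Lu → v ∈ Lv → Lu ≠ Lv → u ≠ x → v ≠ x → dd N u v = 2 := by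
    intro u v Lu Lv hLu hLv hxLu hxLv huLu hvLv hne hux hvx
    have hnadj := nonadj N hord hLu hLv hxLu hxLv huLu hvLv hne hux hvx
    have hne2 : u ≠ v := ne_pts_of_lines N hLu hLv hne hxLu hxLv huLu hvLv hux
    exact dist2_via N (adj_of_line N hLu huLu hxLu hux)
      (adj_of_line N hLv hxLv hvLv (Ne.symm hvx)) hne2 hnadj
  have hypair : ∀ {u v : P} {Lu Lv : Set P}, Lu ∈ N.Lines → Lv ∈ N.Lines → y ∈ Lu → y ∈ Lv →
      u ∈ Lu → v ∈ Lv → Lu ≠ Lv → u ≠ y → v ≠ y → dd N u v = 2 := by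
    intro u v Lu Lv hLu hLv hxLu hxLv huLu hvLv hne hux hvx
    have hnadj := nonadj N hord hLu hLv hxLu hxLv huLu hvLv hne hux hvx
    have hne2 : u ≠ v := ne_pts_of_lines N hLu hLv hne hxLu hxLv huLu hvLv hux
    exact dist2_via N (adj_of_line N hLu huLu hxLu hux)
      (adj_of_line N hLv hxLv hvLv (Ne.symm hvx)) hne2 hnadj
  have hax : a ≠ x := hxa.ne.symm
  have hbx : b ≠ x := hxb.ne.symm
  have hcx : c ≠ x := hxc.ne.symm
  have hay' : a ≠ y := hay.ne
  have hby' : b ≠ y := hby.ne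
  have hcy' : c ≠ y := hcy.ne
  have halpy' : alp ≠ y := halpy
  have dab : dd N a b = 2 := hxpair hA hB hxA hxB haA hbB hAB hax hbx
  have dac : dd N a c = 2 := hxpair hA hC hxA hxC haA hcC hAC hax hcx
  have dbc : dd N b c = 2 := hxpair hB hC hxB hxC hbB hcC hBC hbx hcx
  have dabe : dd N a be = 2 := hxpair hA hB hxA hxB haA hbeB hAB hax hbex
  have daga : dd N a ga = 2 := hxpair hA hC hxA hxC haA hgaC hAC hax hgax
  have dalb : dd N al b = 2 := hxpair hA hB hxA hxB halA hbB hAB halx hbx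
  have dalc : dd N al c = 2 := hxpair hA hC hxA hxC halA hcC hAC halx hcx
  have dalbe : dd N al be = 2 := hxpair hA hB hxA hxB halA hbeB hAB halx hbex
  have dalga : dd N al ga = 2 := hxpair hA hC hxA hxC halA hgaC hAC halx hgax
  have dbga : dd N b ga = 2 := hxpair hB hC hxB hxC hbB hgaC hBC hbx hgax
  have dbec : dd N be c = 2 := hxpair hB hC hxB hxC hbeB hcC hBC hbex hcx
  have dbega : dd N be ga = 2 := hxpair hB hC hxB hxC hbeB hgaC hBC hbex hgax
  have dabep : dd N a bep = 2 := hypair hA' hB' hyA' hyB' haA' hbepB' hA'B' hay' hbepy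
  have dagap : dd N a gap = 2 := hypair hA' hC' hyA' hyC' haA' hgapC' hA'C' hay' hgapy
  have dalpb : dd N alp b = 2 := hypair hA' hB' hyA' hyB' halpA' hbB' hA'B' halpy hby'
  have dalpc : dd N alp c = 2 := hypair hA' hC' hyA' hyC' halpA' hcC' hA'C' halpy hcy'
  have dalpbep : dd N alp bep = 2 := hypair hA' hB' hyA' hyB' halpA' hbepB' hA'B' halpy hbepy
  have dalpgap : dd N alp gap = 2 := hypair hA' hC' hyA' hyC' halpA' hgapC' hA'C' halpy hgapy
  have dbgap : dd N b gap = 2 := hypair hB' hC' hyB' hyC' hbB' hgapC' hB'C' hby' hgapy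
  have dbepc : dd N bep c = 2 := hypair hB' hC' hyB' hyC' hbepB' hcC' hB'C' hbepy hcy'
  have dbepgap : dd N bep gap = 2 := hypair hB' hC' hyB' hyC' hbepB' hgapC' hB'C' hbepy hgapy
  -- cross adjacencies
  have dalY : dd N al y = 2 := by rw [dcomm]; exact dyal
  have dbeY : dd N be y = 2 := by rw [dcomm]; exact dybe
  have dgaY : dd N ga y = 2 := by rw [dcomm]; exact dyga
  have hyb : y ≠ b := fun h => hby.ne h.symm
  have hya : y ≠ a := fun h => hay.ne h.symm
  have hyc : y ≠ c := fun h => hcy.ne h.symm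
  have adjalbep : adj N al bep :=
    two_two N hord hB' hyB' hbB' hbepB' hyb hbepy.symm hbepb.symm dalY dalb
  have adjalgap : adj N al gap :=
    two_two N hord hC' hyC' hcC' hgapC' hyc hgapy.symm hgapc.symm dalY dalc
  have adjbealp : adj N be alp := by
    refine two_two N hord hA' hyA' haA' halpA' hya halpy.symm halpa.symm dbeY ?_
    rw [dcomm]; exact dabe
  have adjbegap : adj N be gap :=
    two_two N hord hC' hyC' hcC' hgapC' hyc hgapy.symm hgapc.symm dbeY dbec
  have adjgaalp : adj N ga alp := by
    refine two_two N hord hA' hyA' haA' halpA' hya halpy.symm halpa.symm dgaY ?_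
    rw [dcomm]; exact daga
  have adjgabep : adj N ga bep := by
    refine two_two N hord hB' hyB' hbB' hbepB' hyb hbepy.symm hbepb.symm dgaY ?_
    rw [dcomm]; exact dbga
  -- distances between matching third points
  have dalalp : dd N al alp = 2 := by
    refine one_two N hord hA' haA' hyA' halpA' hay.ne halpa.symm halpy.symm ?_ dalY
    rw [dcomm]; exact daal
  have dbebep : dd N be bep = 2 := by
    refine one_two N hord hB' hbB' hyB' hbepB' hby.ne hbepb.symm hbepy.symm ?_ dbeY
    rw [dcomm]; exact dbbe
  have dgagap : dd N ga gap = 2 := by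
    refine one_two N hord hC' hcC' hyC' hgapC' hcy.ne hgapc.symm hgapy.symm ?_ dgaY
    rw [dcomm]; exact dcga
  -- reversed one-distances we will need
  have dala : dd N al a = 1 := by rw [dcomm]; exact daal
  have dalpA : dd N alp a = 1 := by rw [dcomm]; exact daalp
  have dbeb : dd N be b = 1 := by rw [dcomm]; exact dbbe
  have dbepb : dd N bep b = 1 := by rw [dcomm]; exact dbbep
  have dgac : dd N ga c = 1 := by rw [dcomm]; exact dcga
  have dgapc : dd N gap c = 1 := by rw [dcomm]; exact dcgap
  have dalpy : dd N alp y = 1 := by rw [dcomm]; exact dyalp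
  have dbepy : dd N bep y = 1 := by rw [dcomm]; exact dybep
  have dgapy : dd N gap y = 1 := by rw [dcomm]; exact dygap
  -- ne facts needed
  have hbealp : be ≠ alp := ne_of_dist N dxbe dxalp (by omega)
  have halbep : al ≠ bep := ne_of_dist N dxal dxbep (by omega)
  have halgap : al ≠ gap := ne_of_dist N dxal dxgap (by omega)
  have hgaalp : ga ≠ alp := ne_of_dist N dxga dxalp (by omega)
  have hgabep : ga ≠ bep := ne_of_dist N dxga dxbep (by omega)
  have hbegap : be ≠ gap := ne_of_dist N dxbe dxgap (by omega)
  -- ==== the point u1 = third point of the line through be and alp ====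
  obtain ⟨M1, u1, hM1, hbeM1, halpM1, hu1M1, hu1be, hu1alp⟩ := third_point N hord adjbealp
  have dxu1 : dd N x u1 = 2 :=
    one_two N hord hM1 hbeM1 halpM1 hu1M1 hbealp hu1be.symm hu1alp.symm dxbe dxalp
  have dyu1 : dd N y u1 = 2 :=
    one_two N hord hM1 halpM1 hbeM1 hu1M1 hbealp.symm hu1alp.symm hu1be.symm dyalp dybe
  have dau1 : dd N a u1 = 2 :=
    one_two N hord hM1 halpM1 hbeM1 hu1M1 hbealp.symm hu1alp.symm hu1be.symm daalp dabe
  have dbu1 : dd N b u1 = 2 := by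
    refine one_two N hord hM1 hbeM1 halpM1 hu1M1 hbealp hu1be.symm hu1alp.symm dbbe ?_
    rw [dcomm]; exact dalpb
  have adjcu1 : adj N c u1 := by
    refine two_two N hord hM1 halpM1 hbeM1 hu1M1 hbealp.symm hu1alp.symm hu1be.symm ?_ ?_
    · rw [dcomm]; exact dalpc
    · rw [dcomm]; exact dbec
  have adjalu1 : adj N al u1 :=
    two_two N hord hM1 halpM1 hbeM1 hu1M1 hbealp.symm hu1alp.symm hu1be.symm dalalp dalbe
  have adjbepu1 : adj N bep u1 := by
    refine two_two N hord hM1 halpM1 hbeM1 hu1M1 hbealp.symm hu1alp.symm hu1be.symm ?_ ?_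
    · rw [dcomm]; exact dalpbep
    · rw [dcomm]; exact dbebep
  have dgau1 : dd N ga u1 = 2 := by
    refine one_two N hord hM1 halpM1 hbeM1 hu1M1 hbealp.symm hu1alp.symm hu1be.symm
      ((d1adj N).2 adjgaalp) ?_
    rw [dcomm]; exact dbega
  have dgapu1 : dd N gap u1 = 2 := by
    refine one_two N hord hM1 hbeM1 halpM1 hu1M1 hbealp hu1be.symm hu1alp.symm
      ((d1adj N).2 adjbegap.symm) ?_
    rw [dcomm]; exact dalpgap
  -- merge: the line through al and bep also contains u1
  obtain ⟨M2, w2, hM2, halM2, hbepM2, hw2M2, hw2al, hw2bep⟩ := third_point N hord adjalbep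
  have hw2u1 : u1 = w2 := by
    refine one_one N hord hM2 halM2 hbepM2 hw2M2 halbep hw2al.symm hw2bep.symm ?_ ?_
    · rw [dcomm]; exact (d1adj N).2 adjalu1
    · rw [dcomm]; exact (d1adj N).2 adjbepu1
  subst hw2u1
  rename' hw2M2 => hu1M2, hw2al => hu1al, hw2bep => hu1bep
  -- ==== the point u2 = third point of the line through ga and alp ====
  obtain ⟨M3, u2, hM3, hgaM3, halpM3, hu2M3, hu2ga, hu2alp⟩ := third_point N hord adjgaalp
  have dxu2 : dd N x u2 = 2 :=
    one_two N hord hM3 hgaM3 halpM3 hu2M3 hgaalp hu2ga.symm hu2alp.symm dxga dxalp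
  have dyu2 : dd N y u2 = 2 :=
    one_two N hord hM3 halpM3 hgaM3 hu2M3 hgaalp.symm hu2alp.symm hu2ga.symm dyalp dyga
  have dau2 : dd N a u2 = 2 :=
    one_two N hord hM3 halpM3 hgaM3 hu2M3 hgaalp.symm hu2alp.symm hu2ga.symm daalp daga
  have dcu2 : dd N c u2 = 2 := by
    refine one_two N hord hM3 hgaM3 halpM3 hu2M3 hgaalp hu2ga.symm hu2alp.symm dcga ?_
    rw [dcomm]; exact dalpc
  have adjbu2 : adj N b u2 := by
    refine two_two N hord hM3 hgaM3 halpM3 hu2M3 hgaalp hu2ga.symm hu2alp.symm dbga ?_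
    rw [dcomm]; exact dalpb
  have adjalu2 : adj N al u2 :=
    two_two N hord hM3 hgaM3 halpM3 hu2M3 hgaalp hu2ga.symm hu2alp.symm dalga dalalp
  have adjgapu2 : adj N gap u2 := by
    refine two_two N hord hM3 hgaM3 halpM3 hu2M3 hgaalp hu2ga.symm hu2alp.symm ?_ ?_
    · rw [dcomm]; exact dgagap
    · rw [dcomm]; exact dalpgap
  have dbeu2 : dd N be u2 = 2 :=
    one_two N hord hM3 halpM3 hgaM3 hu2M3 hgaalp.symm hu2alp.symm hu2ga.symm
      ((d1adj N).2 adjbealp) dbega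
  have dbepu2 : dd N bep u2 = 2 := by
    refine one_two N hord hM3 hgaM3 halpM3 hu2M3 hgaalp hu2ga.symm hu2alp.symm
      ((d1adj N).2 adjgabep.symm) ?_
    rw [dcomm]; exact dalpbep
  -- merge: the line through al and gap also contains u2
  obtain ⟨M4, w4, hM4, halM4, hgapM4, hw4M4, hw4al, hw4gap⟩ := third_point N hord adjalgap
  have hw4u2 : u2 = w4 := by
    refine one_one N hord hM4 halM4 hgapM4 hw4M4 halgap hw4al.symm hw4gap.symm ?_ ?_
    · rw [dcomm]; exact (d1adj N).2 adjalu2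
    · rw [dcomm]; exact (d1adj N).2 adjgapu2
  subst hw4u2
  rename' hw4M4 => hu2M4, hw4al => hu2al, hw4gap => hu2gap
  -- ==== the point u3 = third point of the line through ga and bep ====
  obtain ⟨M5, u3, hM5, hgaM5, hbepM5, hu3M5, hu3ga, hu3bep⟩ := third_point N hord adjgabep
  have dxu3 : dd N x u3 = 2 :=
    one_two N hord hM5 hgaM5 hbepM5 hu3M5 hgabep hu3ga.symm hu3bep.symm dxga dxbep
  have dyu3 : dd N y u3 = 2 :=
    one_two N hord hM5 hbepM5 hgaM5 hu3M5 hgabep.symm hu3bep.symm hu3ga.symm dybep dyga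
  have adjau3 : adj N a u3 :=
    two_two N hord hM5 hgaM5 hbepM5 hu3M5 hgabep hu3ga.symm hu3bep.symm daga dabep
  have dbu3 : dd N b u3 = 2 :=
    one_two N hord hM5 hbepM5 hgaM5 hu3M5 hgabep.symm hu3bep.symm hu3ga.symm dbbep dbga
  have dcu3 : dd N c u3 = 2 := by
    refine one_two N hord hM5 hgaM5 hbepM5 hu3M5 hgabep hu3ga.symm hu3bep.symm dcga ?_
    rw [dcomm]; exact dbepc
  have dalu3 : dd N al u3 = 2 :=
    one_two N hord hM5 hbepM5 hgaM5 hu3M5 hgabep.symm hu3bep.symm hu3ga.symm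
      ((d1adj N).2 adjalbep) dalga
  have adjbeu3 : adj N be u3 :=
    two_two N hord hM5 hgaM5 hbepM5 hu3M5 hgabep hu3ga.symm hu3bep.symm dbega dbebep
  have dalpu3 : dd N alp u3 = 2 :=
    one_two N hord hM5 hgaM5 hbepM5 hu3M5 hgabep hu3ga.symm hu3bep.symm
      ((d1adj N).2 adjgaalp.symm) dalpbep
  have adjgapu3 : adj N gap u3 := by
    refine two_two N hord hM5 hgaM5 hbepM5 hu3M5 hgabep hu3ga.symm hu3bep.symm ?_ ?_
    · rw [dcomm]; exact dgagap
    · rw [dcomm]; exact dbepgap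
  -- merge: the line through be and gap also contains u3
  obtain ⟨M6, w6, hM6, hbeM6, hgapM6, hw6M6, hw6be, hw6gap⟩ := third_point N hord adjbegap
  have hw6u3 : u3 = w6 := by
    refine one_one N hord hM6 hbeM6 hgapM6 hw6M6 hbegap hw6be.symm hw6gap.symm ?_ ?_
    · rw [dcomm]; exact (d1adj N).2 adjbeu3
    · rw [dcomm]; exact (d1adj N).2 adjgapu3
  subst hw6u3
  rename' hw6M6 => hu3M6, hw6be => hu3be, hw6gap => hu3gap
  -- ne from distance two
  have ne_of_two : ∀ {u v : P}, dd N u v = 2 → u ≠ v := by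
    intro u v h heq
    subst heq
    rw [dself N u] at h
    omega
  -- ==== the point r = third point of the line through c and u1 ====
  have dcu1 : dd N c u1 = 1 := (d1adj N).2 adjcu1
  obtain ⟨Tc, r, hTc, hcTc, hu1Tc, hrTc, hrc, hru1⟩ := third_point N hord adjcu1
  have hcu1 : c ≠ u1 := adjcu1.ne
  have dxr : dd N x r = 2 :=
    one_two N hord hTc hcTc hu1Tc hrTc hcu1 hrc.symm hru1.symm dxc dxu1
  have dyr : dd N y r = 2 :=
    one_two N hord hTc hcTc hu1Tc hrTc hcu1 hrc.symm hru1.symm dyc dyu1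
  have adjar : adj N a r :=
    two_two N hord hTc hcTc hu1Tc hrTc hcu1 hrc.symm hru1.symm dac dau1
  have adjbr : adj N b r :=
    two_two N hord hTc hcTc hu1Tc hrTc hcu1 hrc.symm hru1.symm dbc dbu1
  have dgar : dd N ga r = 2 :=
    one_two N hord hTc hcTc hu1Tc hrTc hcu1 hrc.symm hru1.symm dgac dgau1
  have dgapr : dd N gap r = 2 :=
    one_two N hord hTc hcTc hu1Tc hrTc hcu1 hrc.symm hru1.symm dgapc dgapu1
  have dalr : dd N al r = 2 :=
    one_two N hord hTc hu1Tc hcTc hrTc hcu1.symm hru1.symm hrc.symm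
      ((d1adj N).2 adjalu1) dalc
  have dber : dd N be r = 2 :=
    one_two N hord hTc hu1Tc hcTc hrTc hcu1.symm hru1.symm hrc.symm
      (mem_line_dist N hM1 hbeM1 hu1M1 hu1be) dbec
  have dalpr : dd N alp r = 2 :=
    one_two N hord hTc hu1Tc hcTc hrTc hcu1.symm hru1.symm hrc.symm
      (mem_line_dist N hM1 halpM1 hu1M1 hu1alp) dalpc
  have dbepr : dd N bep r = 2 :=
    one_two N hord hTc hu1Tc hcTc hrTc hcu1.symm hru1.symm hrc.symm
      ((d1adj N).2 adjbepu1) dbepc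
  have adjru2 : adj N r u2 := by
    refine two_two N hord hM4 halM4 hgapM4 hu2M4 halgap hu2al.symm hu2gap.symm ?_ ?_
    · rw [dcomm]; exact dalr
    · rw [dcomm]; exact dgapr
  have adjru3 : adj N r u3 := by
    refine two_two N hord hM6 hbeM6 hgapM6 hu3M6 hbegap hu3be.symm hu3gap.symm ?_ ?_
    · rw [dcomm]; exact dber
    · rw [dcomm]; exact dgapr
  -- merges for the lines through r
  obtain ⟨Ta, w7, hTa, haTa, hu3Ta, hw7Ta, hw7a, hw7u3⟩ := third_point N hord adjau3
  have hw7r : r = w7 := by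
    refine one_one N hord hTa haTa hu3Ta hw7Ta adjau3.ne hw7a.symm hw7u3.symm ?_ ?_
    · rw [dcomm]; exact (d1adj N).2 adjar
    · exact (d1adj N).2 adjru3
  subst hw7r
  rename' hw7Ta => hrTa, hw7a => hra, hw7u3 => hru3
  obtain ⟨Tb, w8, hTb, hbTb, hu2Tb, hw8Tb, hw8b, hw8u2⟩ := third_point N hord adjbu2
  have hw8r : r = w8 := by
    refine one_one N hord hTb hbTb hu2Tb hw8Tb adjbu2.ne hw8b.symm hw8u2.symm ?_ ?_
    · rw [dcomm]; exact (d1adj N).2 adjbr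
    · exact (d1adj N).2 adjru2
  subst hw8r
  rename' hw8Tb => hrTb, hw8b => hrb, hw8u2 => hru2
  -- representations of the new lines
  have hM1rep : M1 = {be, alp, u1} :=
    line_eq_of_three N hord hM1 hbeM1 halpM1 hu1M1 hbealp hu1be.symm hu1alp.symm
  have hM2rep : M2 = {al, bep, u1} :=
    line_eq_of_three N hord hM2 halM2 hbepM2 hu1M2 halbep hu1al.symm hu1bep.symm
  have hM3rep : M3 = {ga, alp, u2} :=
    line_eq_of_three N hord hM3 hgaM3 halpM3 hu2M3 hgaalp hu2ga.symm hu2alp.symm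
  have hM4rep : M4 = {al, gap, u2} :=
    line_eq_of_three N hord hM4 halM4 hgapM4 hu2M4 halgap hu2al.symm hu2gap.symm
  have hM5rep : M5 = {ga, bep, u3} :=
    line_eq_of_three N hord hM5 hgaM5 hbepM5 hu3M5 hgabep hu3ga.symm hu3bep.symm
  have hM6rep : M6 = {be, gap, u3} :=
    line_eq_of_three N hord hM6 hbeM6 hgapM6 hu3M6 hbegap hu3be.symm hu3gap.symm
  have hTarep : Ta = {a, u3, r} :=
    line_eq_of_three N hord hTa haTa hu3Ta hrTa adjau3.ne hra.symm hru3.symm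
  have hTbrep : Tb = {b, u2, r} :=
    line_eq_of_three N hord hTb hbTb hu2Tb hrTb adjbu2.ne hrb.symm hru2.symm
  have hTcrep : Tc = {c, u1, r} :=
    line_eq_of_three N hord hTc hcTc hu1Tc hrTc hcu1 hrc.symm hru1.symm
  -- the 15-point set
  set S : Set P := {x, y, a, b, c, al, be, ga, alp, bep, gap, u1, u2, u3, r} with hS
  have hxS : x ∈ S := by rw [hS]; simp
  have hyS : y ∈ S := by rw [hS]; simp
  have haS : a ∈ S := by rw [hS]; simp
  have hbS : b ∈ S := by rw [hS]; simp
  have hcS : c ∈ S := by rw [hS]; simp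
  have halS : al ∈ S := by rw [hS]; simp
  have hbeS : be ∈ S := by rw [hS]; simp
  have hgaS : ga ∈ S := by rw [hS]; simp
  have halpS : alp ∈ S := by rw [hS]; simp
  have hbepS : bep ∈ S := by rw [hS]; simp
  have hgapS : gap ∈ S := by rw [hS]; simp
  have hu1S : u1 ∈ S := by rw [hS]; simp
  have hu2S : u2 ∈ S := by rw [hS]; simp
  have hu3S : u3 ∈ S := by rw [hS]; simp
  have hrS : r ∈ S := by rw [hS]; simp
  -- every line of the configuration lies inside S
  have hAsub : A ⊆ S := by
    rw [hABrep]; rintro w (rfl | rfl | rfl) <;> assumption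
  have hBsub : B ⊆ S := by
    rw [hBrep]; rintro w (rfl | rfl | rfl) <;> assumption
  have hCsub : C ⊆ S := by
    rw [hCrep]; rintro w (rfl | rfl | rfl) <;> assumption
  have hA'sub : A' ⊆ S := by
    rw [hA'rep]; rintro w (rfl | rfl | rfl) <;> assumption
  have hB'sub : B' ⊆ S := by
    rw [hB'rep]; rintro w (rfl | rfl | rfl) <;> assumption
  have hC'sub : C' ⊆ S := by
    rw [hC'rep]; rintro w (rfl | rfl | rfl) <;> assumption
  have hM1sub : M1 ⊆ S := by
    rw [hM1rep]; rintro w (rfl | rfl | rfl) <;> assumption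
  have hM2sub : M2 ⊆ S := by
    rw [hM2rep]; rintro w (rfl | rfl | rfl) <;> assumption
  have hM3sub : M3 ⊆ S := by
    rw [hM3rep]; rintro w (rfl | rfl | rfl) <;> assumption
  have hM4sub : M4 ⊆ S := by
    rw [hM4rep]; rintro w (rfl | rfl | rfl) <;> assumption
  have hM5sub : M5 ⊆ S := by
    rw [hM5rep]; rintro w (rfl | rfl | rfl) <;> assumption
  have hM6sub : M6 ⊆ S := by
    rw [hM6rep]; rintro w (rfl | rfl | rfl) <;> assumption
  have hTasub : Ta ⊆ S := by
    rw [hTarep]; rintro w (rfl | rfl | rfl) <;> assumption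
  have hTbsub : Tb ⊆ S := by
    rw [hTbrep]; rintro w (rfl | rfl | rfl) <;> assumption
  have hTcsub : Tc ⊆ S := by
    rw [hTcrep]; rintro w (rfl | rfl | rfl) <;> assumption
  -- auxiliary inequalities
  have nyx : y ≠ x := ne_of_two dyx
  have nyal : y ≠ al := ne_of_two dyal
  have nybe : y ≠ be := ne_of_two dybe
  have nyga : y ≠ ga := ne_of_two dyga
  have nrx : r ≠ x := (ne_of_two dxr).symm
  have nry : r ≠ y := (ne_of_two dyr).symm
  have nra : r ≠ a := adjar.ne.symm
  have nrb : r ≠ b := adjbr.ne.symm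
  have nral : r ≠ al := (ne_of_two dalr).symm
  have nrbe : r ≠ be := (ne_of_two dber).symm
  have nrga : r ≠ ga := (ne_of_two dgar).symm
  have nralp : r ≠ alp := (ne_of_two dalpr).symm
  have nrbep : r ≠ bep := (ne_of_two dbepr).symm
  have nrgap : r ≠ gap := (ne_of_two dgapr).symm
  have nbepx : bep ≠ x := (ne_of_two dxbep).symm
  have ngapx : gap ≠ x := (ne_of_two dxgap).symm
  have nalpx : alp ≠ x := (ne_of_two dxalp).symm
  have nbepa : bep ≠ a := ne_of_dist N dxbep dxa (by omega)
  have nbepal : bep ≠ al := ne_of_dist N dxbep dxal (by omega)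
  have ngapa : gap ≠ a := ne_of_dist N dxgap dxa (by omega)
  have ngapal : gap ≠ al := ne_of_dist N dxgap dxal (by omega)
  have nalpb : alp ≠ b := ne_of_dist N dxalp dxb (by omega)
  have nalpbe : alp ≠ be := ne_of_dist N dxalp dxbe (by omega)
  have ngapb : gap ≠ b := ne_of_dist N dxgap dxb (by omega)
  have ngapbe : gap ≠ be := ne_of_dist N dxgap dxbe (by omega)
  have nalpc : alp ≠ c := ne_of_dist N dxalp dxc (by omega)
  have nalpga : alp ≠ ga := hgaalp.symm
  have nbepc : bep ≠ c := ne_of_dist N dxbep dxc (by omega)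
  have nbepga : bep ≠ ga := hgabep.symm
  -- the three lines through each point of S and closure of S under adjacency
  have hnm : ∀ {u : P} {p q s : P}, u ≠ p → u ≠ q → u ≠ s → u ∉ ({p, q, s} : Set P) := by
    intro u p q s h1 h2 h3 hm
    simp only [Set.mem_insert_iff, Set.mem_singleton_iff] at hm
    tauto
  have hAA' : A ≠ A' := (ne_line_of hyA' (by rw [hABrep]; exact hnm nyx hya nyal)).symm
  have hATa : A ≠ Ta := (ne_line_of hrTa (by rw [hABrep]; exact hnm nrx nra nral)).symm
  have hA'Ta : A' ≠ Ta := (ne_line_of hrTa (by rw [hA'rep]; exact hnm nra nry nralp)).symm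
  have hBB' : B ≠ B' := (ne_line_of hyB' (by rw [hBrep]; exact hnm nyx hyb nybe)).symm
  have hBTb : B ≠ Tb := (ne_line_of hrTb (by rw [hBrep]; exact hnm nrx nrb nrbe)).symm
  have hB'Tb : B' ≠ Tb := (ne_line_of hrTb (by rw [hB'rep]; exact hnm nrb nry nrbep)).symm
  have hCC' : C ≠ C' := (ne_line_of hyC' (by rw [hCrep]; exact hnm nyx hyc nyga)).symm
  have hCTc : C ≠ Tc := (ne_line_of hrTc (by rw [hCrep]; exact hnm nrx hrc nrga)).symm
  have hC'Tc : C' ≠ Tc := (ne_line_of hrTc (by rw [hC'rep]; exact hnm hrc nry nrgap)).symm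
  have hAM2 : A ≠ M2 := (ne_line_of hbepM2 (by rw [hABrep]; exact hnm nbepx nbepa nbepal)).symm
  have hAM4 : A ≠ M4 := (ne_line_of hgapM4 (by rw [hABrep]; exact hnm ngapx ngapa ngapal)).symm
  have hM2M4 : M2 ≠ M4 :=
    ne_line_of hbepM2 (by rw [hM4rep]; exact hnm nbepal (ne_of_two dbepgap) (ne_of_two dbepu2))
  have hBM1 : B ≠ M1 := (ne_line_of halpM1 (by rw [hBrep]; exact hnm nalpx nalpb nalpbe)).symm
  have hBM6 : B ≠ M6 := (ne_line_of hgapM6 (by rw [hBrep]; exact hnm ngapx ngapb ngapbe)).symm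
  have hM1M6 : M1 ≠ M6 :=
    ne_line_of halpM1 (by rw [hM6rep]; exact hnm nalpbe (ne_of_two dalpgap) (ne_of_two dalpu3))
  have hCM3 : C ≠ M3 := (ne_line_of halpM3 (by rw [hCrep]; exact hnm nalpx nalpc nalpga)).symm
  have hCM5 : C ≠ M5 := (ne_line_of hbepM5 (by rw [hCrep]; exact hnm nbepx nbepc nbepga)).symm
  have hM3M5 : M3 ≠ M5 :=
    ne_line_of halpM3 (by rw [hM5rep]; exact hnm nalpga (ne_of_two dalpbep) (ne_of_two dalpu3))
  have hA'M1 : A' ≠ M1 := (ne_line_of hbeM1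
    (by rw [hA'rep]; exact hnm (ne_of_two dabe).symm (ne_of_two dbeY) hbealp)).symm
  have hA'M3 : A' ≠ M3 := (ne_line_of hgaM3
    (by rw [hA'rep]; exact hnm (ne_of_two daga).symm (ne_of_two dgaY) hgaalp)).symm
  have hM1M3 : M1 ≠ M3 :=
    ne_line_of hbeM1 (by rw [hM3rep]; exact hnm (ne_of_two dbega) hbealp (ne_of_two dbeu2))
  have hB'M2 : B' ≠ M2 := (ne_line_of halM2
    (by rw [hB'rep]; exact hnm (ne_of_two dalb) (ne_of_two dalY) halbep)).symm
  have hB'M5 : B' ≠ M5 := (ne_line_of hgaM5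
    (by rw [hB'rep]; exact hnm (ne_of_two dbga).symm (ne_of_two dgaY) hgabep)).symm
  have hM2M5 : M2 ≠ M5 :=
    ne_line_of halM2 (by rw [hM5rep]; exact hnm (ne_of_two dalga) halbep (ne_of_two dalu3))
  have hC'M4 : C' ≠ M4 := (ne_line_of halM4
    (by rw [hC'rep]; exact hnm (ne_of_two dalc) (ne_of_two dalY) halgap)).symm
  have hC'M6 : C' ≠ M6 := (ne_line_of hbeM6
    (by rw [hC'rep]; exact hnm (ne_of_two dbec) (ne_of_two dbeY) hbegap)).symm
  have hM4M6 : M4 ≠ M6 :=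
    ne_line_of halM4 (by rw [hM6rep]; exact hnm (ne_of_two dalbe) halgap (ne_of_two dalu3))
  have nbeal : be ≠ al := (ne_of_two dalbe).symm
  have nbebep : be ≠ bep := ne_of_two dbebep
  have hM1M2 : M1 ≠ M2 :=
    ne_line_of hbeM1 (by rw [hM2rep]; exact hnm nbeal nbebep hu1be.symm)
  have hM1Tc : M1 ≠ Tc :=
    ne_line_of hbeM1 (by rw [hTcrep]; exact hnm (ne_of_two dbec) hu1be.symm nrbe.symm)
  have hM2Tc : M2 ≠ Tc :=
    ne_line_of halM2 (by rw [hTcrep]; exact hnm (ne_of_two dalc) hu1al.symm nral.symm)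
  have ngaal : ga ≠ al := (ne_of_two dalga).symm
  have ngagap : ga ≠ gap := ne_of_two dgagap
  have hM3M4 : M3 ≠ M4 :=
    ne_line_of hgaM3 (by rw [hM4rep]; exact hnm ngaal ngagap hu2ga.symm)
  have hM3Tb : M3 ≠ Tb :=
    ne_line_of halpM3 (by rw [hTbrep]; exact hnm nalpb hu2alp.symm nralp.symm)
  have hM4Tb : M4 ≠ Tb :=
    ne_line_of halM4 (by rw [hTbrep]; exact hnm (ne_of_two dalb) hu2al.symm nral.symm)
  have ngabe : ga ≠ be := (ne_of_two dbega).symm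
  have hM5M6 : M5 ≠ M6 :=
    ne_line_of hgaM5 (by rw [hM6rep]; exact hnm ngabe ngagap hu3ga.symm)
  have hM5Ta : M5 ≠ Ta :=
    ne_line_of hbepM5 (by rw [hTarep]; exact hnm nbepa hu3bep.symm nrbep.symm)
  have hM6Ta : M6 ≠ Ta :=
    ne_line_of hbeM6 (by rw [hTarep]; exact hnm (ne_of_two dabe).symm hu3be.symm nrbe.symm)
  have hTaTb : Ta ≠ Tb :=
    ne_line_of haTa (by rw [hTbrep]; exact hnm hab (ne_of_two dau2) adjar.ne)
  have hTaTc : Ta ≠ Tc :=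
    ne_line_of haTa (by rw [hTcrep]; exact hnm hac (ne_of_two dau1) adjar.ne)
  have hTbTc : Tb ≠ Tc :=
    ne_line_of hbTb (by rw [hTcrep]; exact hnm hbc (ne_of_two dbu1) adjbr.ne)
  -- closure of S under adjacency
  have hclose : ∀ z ∈ S, ∀ w, adj N z w → w ∈ S := by
    intro z hz w hw
    rw [hS] at hz
    simp only [Set.mem_insert_iff, Set.mem_singleton_iff] at hz
    rcases hz with rfl | rfl | rfl | rfl | rfl | rfl | rfl | rfl | rfl | rfl | rfl | rfl |
      rfl | rfl | rfl
    · rcases nbrs_via_lines N hord hA hB hC hxA hxB hxC hAB hAC hBC w hw with h | h | h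
      exacts [hAsub h, hBsub h, hCsub h]
    · rcases nbrs_via_lines N hord hA' hB' hC' hyA' hyB' hyC' hA'B' hA'C' hB'C' w hw
        with h | h | h
      exacts [hA'sub h, hB'sub h, hC'sub h]
    · rcases nbrs_via_lines N hord hA hA' hTa haA haA' haTa hAA' hATa hA'Ta w hw with h | h | h
      exacts [hAsub h, hA'sub h, hTasub h]
    · rcases nbrs_via_lines N hord hB hB' hTb hbB hbB' hbTb hBB' hBTb hB'Tb w hw with h | h | h
      exacts [hBsub h, hB'sub h, hTbsub h]
    · rcases nbrs_via_lines N hord hC hC' hTc hcC hcC' hcTc hCC' hCTc hC'Tc w hw with h | h | h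
      exacts [hCsub h, hC'sub h, hTcsub h]
    · rcases nbrs_via_lines N hord hA hM2 hM4 halA halM2 halM4 hAM2 hAM4 hM2M4 w hw
        with h | h | h
      exacts [hAsub h, hM2sub h, hM4sub h]
    · rcases nbrs_via_lines N hord hB hM1 hM6 hbeB hbeM1 hbeM6 hBM1 hBM6 hM1M6 w hw
        with h | h | h
      exacts [hBsub h, hM1sub h, hM6sub h]
    · rcases nbrs_via_lines N hord hC hM3 hM5 hgaC hgaM3 hgaM5 hCM3 hCM5 hM3M5 w hw
        with h | h | h
      exacts [hCsub h, hM3sub h, hM5sub h]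
    · rcases nbrs_via_lines N hord hA' hM1 hM3 halpA' halpM1 halpM3 hA'M1 hA'M3 hM1M3 w hw
        with h | h | h
      exacts [hA'sub h, hM1sub h, hM3sub h]
    · rcases nbrs_via_lines N hord hB' hM2 hM5 hbepB' hbepM2 hbepM5 hB'M2 hB'M5 hM2M5 w hw
        with h | h | h
      exacts [hB'sub h, hM2sub h, hM5sub h]
    · rcases nbrs_via_lines N hord hC' hM4 hM6 hgapC' hgapM4 hgapM6 hC'M4 hC'M6 hM4M6 w hw
        with h | h | h
      exacts [hC'sub h, hM4sub h, hM6sub h]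
    · rcases nbrs_via_lines N hord hM1 hM2 hTc hu1M1 hu1M2 hu1Tc hM1M2 hM1Tc hM2Tc w hw
        with h | h | h
      exacts [hM1sub h, hM2sub h, hTcsub h]
    · rcases nbrs_via_lines N hord hM3 hM4 hTb hu2M3 hu2M4 hu2Tb hM3M4 hM3Tb hM4Tb w hw
        with h | h | h
      exacts [hM3sub h, hM4sub h, hTbsub h]
    · rcases nbrs_via_lines N hord hM5 hM6 hTa hu3M5 hu3M6 hu3Ta hM5M6 hM5Ta hM6Ta w hw
        with h | h | h
      exacts [hM5sub h, hM6sub h, hTasub h]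
    · rcases nbrs_via_lines N hord hTa hTb hTc hrTa hrTb hrTc hTaTb hTaTc hTbTc w hw
        with h | h | h
      exacts [hTasub h, hTbsub h, hTcsub h]
  -- every point lies in S, by induction on the distance from x
  have hall : ∀ (nn : ℕ) (w : P), dd N x w ≤ nn → w ∈ S := by
    intro nn
    induction nn with
    | zero =>
        intro w hw
        have : x = w := (deq0 N).1 (Nat.le_zero.1 hw)
        exact this ▸ hxS
    | succ n ih =>
        intro w hw
        rcases Nat.lt_or_ge (dd N x w) (n + 1) with h | h
        · exact ih w (Nat.lt_succ_iff.1 h)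
        · have he : dd N x w = n + 1 := le_antisymm hw h
          obtain ⟨z, hzw, hz⟩ := pred_exists N he
          exact hclose z (ih z (le_of_eq hz)) w hzw
  -- S has at most 15 elements, so v ≤ 15
  haveI : Finite P := finiteP N hord
  have hcard15 : S.ncard ≤ 15 := by
    rw [hS]
    have s14 : ({r} : Set P).ncard ≤ 1 := le_of_eq (Set.ncard_singleton r)
    have s13 : ({u3, r} : Set P).ncard ≤ 2 :=
      (Set.ncard_insert_le _ _).trans (by omega)
    have s12 : ({u2, u3, r} : Set P).ncard ≤ 3 :=
      (Set.ncard_insert_le _ _).trans (by omega)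
    have s11 : ({u1, u2, u3, r} : Set P).ncard ≤ 4 :=
      (Set.ncard_insert_le _ _).trans (by omega)
    have s10 : ({gap, u1, u2, u3, r} : Set P).ncard ≤ 5 :=
      (Set.ncard_insert_le _ _).trans (by omega)
    have s9 : ({bep, gap, u1, u2, u3, r} : Set P).ncard ≤ 6 :=
      (Set.ncard_insert_le _ _).trans (by omega)
    have s8 : ({alp, bep, gap, u1, u2, u3, r} : Set P).ncard ≤ 7 :=
      (Set.ncard_insert_le _ _).trans (by omega)
    have s7 : ({ga, alp, bep, gap, u1, u2, u3, r} : Set P).ncard ≤ 8 :=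
      (Set.ncard_insert_le _ _).trans (by omega)
    have s6 : ({be, ga, alp, bep, gap, u1, u2, u3, r} : Set P).ncard ≤ 9 :=
      (Set.ncard_insert_le _ _).trans (by omega)
    have s5 : ({al, be, ga, alp, bep, gap, u1, u2, u3, r} : Set P).ncard ≤ 10 :=
      (Set.ncard_insert_le _ _).trans (by omega)
    have s4 : ({c, al, be, ga, alp, bep, gap, u1, u2, u3, r} : Set P).ncard ≤ 11 :=
      (Set.ncard_insert_le _ _).trans (by omega)
    have s3 : ({b, c, al, be, ga, alp, bep, gap, u1, u2, u3, r} : Set P).ncard ≤ 12 :=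
      (Set.ncard_insert_le _ _).trans (by omega)
    have s2 : ({a, b, c, al, be, ga, alp, bep, gap, u1, u2, u3, r} : Set P).ncard ≤ 13 :=
      (Set.ncard_insert_le _ _).trans (by omega)
    have s1 : ({y, a, b, c, al, be, ga, alp, bep, gap, u1, u2, u3, r} : Set P).ncard ≤ 14 :=
      (Set.ncard_insert_le _ _).trans (by omega)
    exact (Set.ncard_insert_le _ _).trans (by omega)
  have hv15 : Nat.card P ≤ 15 := by
    have hsub : (Set.univ : Set P) ⊆ S := fun w _ => hall (dd N x w) w le_rfl
    have := Set.ncard_le_ncard hsub (Set.toFinite S)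
    rw [Set.ncard_univ] at this
    omega
  -- but a pair at distance three forces v ≥ 16
  obtain ⟨p0, q0, hdiam⟩ := N.diam_eq
  have hT2 := t2_nonempty N hord (show dd N p0 q0 = 3 from hdiam)
  have hT2c : 0 < (T2 N p0).ncard := (Set.ncard_pos (Set.toFinite _)).2 hT2
  have hpart := lines_partition N hord p0
  have hnl := nlines_eq N hord
  omega

end MuTwo

section MuCount
variable (N : NearPolygon P 3)

lemma no_three_common (hord : N.hasOrder 2 2) {x y a b c : P} (hxy : x ≠ y)
    (hab : a ≠ b) (hac : a ≠ c) (hbc : b ≠ c)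
    (ha1 : adj N x a) (ha2 : adj N a y) (hb1 : adj N x b) (hb2 : adj N b y)
    (hc1 : adj N x c) (hc2 : adj N c y) : False := by
  have e1 := (d1adj N).2 ha1
  have e2 := (d1adj N).2 ha2
  have hle : dd N x y ≤ 2 := by have := dtri N x a y; omega
  have h2 : dd N x y = 2 := by
    rcases (show dd N x y = 0 ∨ dd N x y = 1 ∨ dd N x y = 2 by omega) with h | h | h
    · exact absurd ((deq0 N).1 h) hxy
    · exfalso
      have hadj : adj N x y := (d1adj N).1 h
      obtain ⟨L, w, hL, hxL, hyL, hwL, hwx, hwy⟩ := third_point N hord hadj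
      have hwa : a = w := by
        refine one_one N hord hL hxL hyL hwL hxy hwx.symm hwy.symm ?_ ?_
        · rw [dcomm]; exact (d1adj N).2 ha1
        · exact (d1adj N).2 ha2
      have hwb : b = w := by
        refine one_one N hord hL hxL hyL hwL hxy hwx.symm hwy.symm ?_ ?_
        · rw [dcomm]; exact (d1adj N).2 hb1
        · exact (d1adj N).2 hb2
      exact hab (hwa.trans hwb.symm)
    · exact h
  exact mu_le_two_aux N hord h2 hab hac hbc ha1 ha2 hb1 hb2 hc1 hc2

/-- the number of common neighbours of two points at distance 2 is 1 or 2 -/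
lemma mu_val (hord : N.hasOrder 2 2) {p z : P} (h : dd N p z = 2) :
    {e | dd N p e = 1 ∧ adj N e z}.ncard = 1 ∨ {e | dd N p e = 1 ∧ adj N e z}.ncard = 2 := by
  haveI : Finite P := finiteP N hord
  have h1 : 0 < {e | dd N p e = 1 ∧ adj N e z}.ncard := by
    rw [Set.ncard_pos (Set.toFinite _)]
    obtain ⟨e, he1, he2⟩ := mu_pos N h
    exact ⟨e, he1, he2⟩
  have h2 : ¬ (2 < {e | dd N p e = 1 ∧ adj N e z}.ncard) := by
    intro hgt
    rw [Set.two_lt_ncard_iff (Set.toFinite _)] at hgt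
    obtain ⟨e1, e2, e3, ⟨hd1, ha1⟩, ⟨hd2, ha2⟩, ⟨hd3, ha3⟩, h12, h13, h23⟩ := hgt
    have hpz : p ≠ z := ne_of_dist N (dself N p) h (by omega)
    exact no_three_common N hord hpz h12 h13 h23
      ((d1adj N).1 hd1) ha1 ((d1adj N).1 hd2) ha2 ((d1adj N).1 hd3) ha3
  omega

/-- Σ μ = 24 expanded:  n₂ + g₂ = 24 -/
lemma g2_card (hord : N.hasOrder 2 2) (p : P) :
    {z | dd N p z = 2}.ncard
      + {z | dd N p z = 2 ∧ {e | dd N p e = 1 ∧ adj N e z}.ncard = 2}.ncard = 24 := by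
  haveI : Finite P := finiteP N hord
  set G1 : Set P := {z | dd N p z = 2 ∧ {e | dd N p e = 1 ∧ adj N e z}.ncard = 1} with hG1
  set G2 : Set P := {z | dd N p z = 2 ∧ {e | dd N p e = 1 ∧ adj N e z}.ncard = 2} with hG2
  have hd12 : Disjoint G1 G2 := by
    rw [Set.disjoint_left]
    rintro z ⟨-, h1⟩ ⟨-, h2⟩
    rw [h1] at h2
    omega
  have hsplit : {z | dd N p z = 2} = G1 ∪ G2 := by
    ext z
    simp only [hG1, hG2, Set.mem_union, Set.mem_setOf_eq]
    constructor
    · intro hz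
      rcases mu_val N hord hz with h | h
      · exact Or.inl ⟨hz, h⟩
      · exact Or.inr ⟨hz, h⟩
    · rintro (⟨hz, -⟩ | ⟨hz, -⟩) <;> exact hz
  have hn2 : {z | dd N p z = 2}.ncard = G1.ncard + G2.ncard := by
    rw [hsplit, Set.ncard_union_eq hd12 (Set.toFinite _) (Set.toFinite _)]
  -- split the 24 edges
  have hRsplit : {w : P × P | dd N p w.1 = 1 ∧ dd N p w.2 = 2 ∧ adj N w.1 w.2}
      = {w : P × P | (dd N p w.1 = 1 ∧ adj N w.1 w.2) ∧ w.2 ∈ G1}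
      ∪ {w : P × P | (dd N p w.1 = 1 ∧ adj N w.1 w.2) ∧ w.2 ∈ G2} := by
    ext w
    simp only [hG1, hG2, Set.mem_union, Set.mem_setOf_eq]
    constructor
    · rintro ⟨h1, h2, h3⟩
      rcases mu_val N hord h2 with h | h
      · exact Or.inl ⟨⟨h1, h3⟩, h2, h⟩
      · exact Or.inr ⟨⟨h1, h3⟩, h2, h⟩
    · rintro (⟨⟨h1, h3⟩, h2, -⟩ | ⟨⟨h1, h3⟩, h2, -⟩) <;> exact ⟨h1, h2, h3⟩
  have hdisjR : Disjoint {w : P × P | (dd N p w.1 = 1 ∧ adj N w.1 w.2) ∧ w.2 ∈ G1}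
      {w : P × P | (dd N p w.1 = 1 ∧ adj N w.1 w.2) ∧ w.2 ∈ G2} := by
    rw [Set.disjoint_left]
    rintro w ⟨-, h1⟩ ⟨-, h2⟩
    exact (Set.disjoint_left.1 hd12) h1 h2
  have hc1 : {w : P × P | (dd N p w.1 = 1 ∧ adj N w.1 w.2) ∧ w.2 ∈ G1}.ncard
      = 1 * G1.ncard := by
    refine count_pairs_snd _ _ 1 (fun w hw => hw.2) ?_
    intro z hz
    have hzz := hz
    rw [hG1] at hzz
    obtain ⟨hz2, hz1⟩ := hzz
    have hconv : {a | (a, z) ∈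
        {w : P × P | (dd N p w.1 = 1 ∧ adj N w.1 w.2) ∧ w.2 ∈ G1}}
        = {e | dd N p e = 1 ∧ adj N e z} := by
      ext e
      simp only [Set.mem_setOf_eq]
      exact ⟨fun h => h.1, fun h => ⟨h, hz⟩⟩
    rw [hconv, hz1]
  have hc2 : {w : P × P | (dd N p w.1 = 1 ∧ adj N w.1 w.2) ∧ w.2 ∈ G2}.ncard
      = 2 * G2.ncard := by
    refine count_pairs_snd _ _ 2 (fun w hw => hw.2) ?_
    intro z hz
    have hzz := hz
    rw [hG2] at hzz
    obtain ⟨hz2, hz1⟩ := hzz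
    have hconv : {a | (a, z) ∈
        {w : P × P | (dd N p w.1 = 1 ∧ adj N w.1 w.2) ∧ w.2 ∈ G2}}
        = {e | dd N p e = 1 ∧ adj N e z} := by
      ext e
      simp only [Set.mem_setOf_eq]
      exact ⟨fun h => h.1, fun h => ⟨h, hz⟩⟩
    rw [hconv, hz1]
  have h24 := E12_eq N hord p
  rw [hRsplit, Set.ncard_union_eq hdisjR (Set.toFinite _) (Set.toFinite _), hc1, hc2] at h24
  omega

end MuCount

section QuadHelpers
variable (N : NearPolygon P 3)

lemma ne_of_two' {u v : P} (h : dd N u v = 2) : u ≠ v := by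
  intro heq
  subst heq
  rw [dself N u] at h
  omega

lemma noadj_of_two {u v : P} (h : dd N u v = 2) (ha : adj N u v) : False := by
  have := (d1adj N).2 ha
  omega

lemma common_two (hord : N.hasOrder 2 2) {u v w1 w2 : P} (huv : u ≠ v)
    (h1 : adj N u w1) (h2 : adj N w1 v) (h3 : adj N u w2) (h4 : adj N w2 v)
    (h12 : w1 ≠ w2) : ∀ e, adj N u e → adj N e v → e = w1 ∨ e = w2 := by
  intro e he1 he2
  by_contra hcon
  push_neg at hcon
  exact no_three_common N hord huv hcon.1 hcon.2 h12 he1 he2 h1 h2 h3 h4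

/-- in a quad `Q`, a point at distance 2 from `x ∈ Q` has exactly two common
neighbours with `x`, both inside `Q` -/
lemma quad_mu2 (hord : N.hasOrder 2 2) {Q : Set P} {x z : P} (hQ : IsQuad N.Lines Q)
    (hx : x ∈ Q) (hz : z ∈ Q) (hd : dd N x z = 2) :
    ∃ w1 w2, w1 ≠ w2 ∧ {e | dd N x e = 1 ∧ adj N e z} = {w1, w2} ∧
      w1 ∈ Q ∧ w2 ∈ Q ∧ adj N x w1 ∧ adj N w1 z ∧ adj N x w2 ∧ adj N w2 z := by
  obtain ⟨L1, hL1, L2, hL2, hL1Q, hL2Q, hzL1, hzL2, hL12⟩ := hQ.2.2.2.2.1 z hz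
  have hxz : x ≠ z := ne_of_two' N hd
  have hxL1 : x ∉ L1 := by
    intro hmem
    exact noadj_of_two N hd (adj_of_line N hL1 hmem hzL1 hxz)
  have hxL2 : x ∉ L2 := by
    intro hmem
    exact noadj_of_two N hd (adj_of_line N hL2 hmem hzL2 hxz)
  obtain ⟨w1, ⟨hw1L, hw1adj⟩, -⟩ := hQ.2.2.2.1 x hx L1 hL1 hL1Q hxL1
  obtain ⟨w2, ⟨hw2L, hw2adj⟩, -⟩ := hQ.2.2.2.1 x hx L2 hL2 hL2Q hxL2
  have hw1z : w1 ≠ z := by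
    intro h
    exact noadj_of_two N hd (h ▸ hw1adj)
  have hw2z : w2 ≠ z := by
    intro h
    exact noadj_of_two N hd (h ▸ hw2adj)
  have hw12 : w1 ≠ w2 := by
    intro h
    exact hL12 (line_unique' N hL1 hL2 hw1z hw1L hzL1 (h ▸ hw2L) hzL2)
  have ha1 : adj N w1 z := adj_of_line N hL1 hw1L hzL1 hw1z
  have ha2 : adj N w2 z := adj_of_line N hL2 hw2L hzL2 hw2z
  refine ⟨w1, w2, hw12, ?_, hL1Q hw1L, hL2Q hw2L, hw1adj, ha1, hw2adj, ha2⟩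
  ext e
  simp only [Set.mem_setOf_eq, Set.mem_insert_iff, Set.mem_singleton_iff]
  constructor
  · rintro ⟨he1, he2⟩
    exact common_two N hord hxz hw1adj ha1 hw2adj ha2 hw12 e ((d1adj N).1 he1) he2
  · rintro (rfl | rfl)
    · exact ⟨(d1adj N).2 hw1adj, ha1⟩
    · exact ⟨(d1adj N).2 hw2adj, ha2⟩

/-- a quad contains a point at distance 2 from any of its points -/
lemma quad_far (hord : N.hasOrder 2 2) {Q : Set P} {x : P} (hQ : IsQuad N.Lines Q)
    (hx : x ∈ Q) : ∃ z ∈ Q, dd N x z = 2 := by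
  obtain ⟨g, hg, h, hh, hgh, hnadj⟩ := hQ.2.2.2.2.2
  have hdle : ∀ u ∈ Q, ∀ v ∈ Q, dd N u v ≤ 2 := hQ.2.1
  by_cases hgx : g = x
  · subst hgx
    exact ⟨h, hh, dist2 N hgh hnadj (hdle g hg h hh)⟩
  by_cases hhx : h = x
  · subst hhx
    exact ⟨g, hg, dist2 N (Ne.symm hgh) (fun hadj => hnadj hadj.symm) (hdle h hh g hg)⟩
  by_cases hag : adj N x g
  case neg =>
    exact ⟨g, hg, dist2 N (Ne.symm hgx) hag (hdle x hx g hg)⟩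
  by_cases hah : adj N x h
  case neg =>
    exact ⟨h, hh, dist2 N (Ne.symm hhx) hah (hdle x hx h hh)⟩
  -- both adjacent: find a line through g inside Q missing x
  obtain ⟨L1, hL1, L2, hL2, hL1Q, hL2Q, hgL1, hgL2, hL12⟩ := hQ.2.2.2.2.1 g hg
  have hxone : x ∉ L1 ∨ x ∉ L2 := by
    by_contra hcon
    push_neg at hcon
    exact hL12 (line_unique' N hL1 hL2 (Ne.symm hgx) hcon.1 hgL1 hcon.2 hgL2)
  obtain ⟨L, hL, hLQ, hgL, hxL⟩ : ∃ L, L ∈ N.Lines ∧ L ⊆ Q ∧ g ∈ L ∧ x ∉ L := by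
    rcases hxone with hc | hc
    · exact ⟨L1, hL1, hL1Q, hgL1, hc⟩
    · exact ⟨L2, hL2, hL2Q, hgL2, hc⟩
  obtain ⟨s, t, hst, hgs, hgt, hrep⟩ := line_minus N hord hL hgL
  have hsQ : s ∈ Q := hLQ (by rw [hrep]; simp)
  have hsx : s ≠ x := fun hcon => hxL (hcon ▸ (by rw [hrep]; simp : s ∈ L))
  -- every point of Q is x or adjacent to x in this branch? no: we know g,h adjacent;
  -- but we need adjacency of x to s: s could be non adjacent, then done differently
  by_cases has : adj N x s
  · -- x adjacent to both g and s on line L: x must be the third point t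
    exfalso
    have hx3 : x = t :=
      one_one N hord hL (by rw [hrep]; simp) (by rw [hrep]; simp)
        (by rw [hrep]; simp) hgs hgt hst ((d1adj N).2 hag) ((d1adj N).2 has)
    exact hxL (hx3 ▸ (by rw [hrep]; simp : t ∈ L))
  · exact ⟨s, hsQ, dist2 N (Ne.symm hsx) has (hdle x hx s hsQ)⟩

end QuadHelpers

section GridHelpers
variable (N : NearPolygon P 3)

lemma third_line_unique (hord : N.hasOrder 2 2) {y : P} {A' B' L1 L2 : Set P}
    (hA' : A' ∈ N.Lines) (hB' : B' ∈ N.Lines) (hyA' : y ∈ A') (hyB' : y ∈ B')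
    (hAB : A' ≠ B') (h1 : L1 ∈ N.Lines) (h2 : L2 ∈ N.Lines) (hy1 : y ∈ L1) (hy2 : y ∈ L2)
    (h1A : L1 ≠ A') (h1B : L1 ≠ B') (h2A : L2 ≠ A') (h2B : L2 ≠ B') : L1 = L2 := by
  obtain ⟨M1, M2, M3, h12, h13, h23, hM1, hM2, hM3, hcov⟩ := three_lines N hord y
  rcases hcov A' hA' hyA' with rfl | rfl | rfl <;>
    rcases hcov B' hB' hyB' with rfl | rfl | rfl <;>
      rcases hcov L1 h1 hy1 with rfl | rfl | rfl <;>
        rcases hcov L2 h2 hy2 with rfl | rfl | rfl <;>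
          tauto

lemma alp_c_absurd (hord : N.hasOrder 2 2) {x b al be alp bep om c : P} {M1 : Set P}
    (hM1 : M1 ∈ N.Lines) (halM1 : al ∈ M1) (hbepM1 : bep ∈ M1) (hM1rep : M1 = {al, bep, om})
    (nalbep : al ≠ bep)
    (adjxc : adj N x c) (dxalp : dd N x alp = 2)
    (dbalp : dd N b alp = 2) (dbc : dd N b c = 2)
    (dalalp : dd N al alp = 2) (dalc : dd N al c = 2)
    (adjalbep : adj N al bep) (dbepalp : dd N bep alp = 2)
    (hxom2 : ∀ e, adj N x e → adj N e om → e = al ∨ e = be)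
    (hcal : c ≠ al) (hcbe : c ≠ be) (hbal : b ≠ al)
    (adjbbep : adj N b bep) (hadj : adj N alp c) : False := by
  obtain ⟨Lh, h, hLh, halpLh, hcLh, hhLh, hhalp, hhc⟩ := third_point N hord hadj
  have adjbh : adj N b h :=
    two_two N hord hLh halpLh hcLh hhLh hadj.ne hhalp.symm hhc.symm dbalp dbc
  have adjalh : adj N al h :=
    two_two N hord hLh halpLh hcLh hhLh hadj.ne hhalp.symm hhc.symm dalalp dalc
  have dxh : dd N x h = 2 :=
    one_two N hord hLh hcLh halpLh hhLh (Ne.symm hadj.ne) hhc.symm hhalp.symm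
      ((d1adj N).2 adjxc) dxalp
  obtain ⟨Lk, n, hLk, halLk, hhLk, hnLk, hnal, hnh⟩ := third_point N hord adjalh
  have adjalph : adj N alp h := adj_of_line N hLh halpLh hhLh hhalp.symm
  have hbeph : bep ≠ h := by
    intro heq
    exact noadj_of_two N dbepalp (heq ▸ adjalph.symm)
  have hbepn : bep ≠ n := by
    intro heq
    subst heq
    have hLkM1 : Lk = M1 := line_unique' N hLk hM1 nalbep halLk hnLk halM1 hbepM1
    have hhM1 : h ∈ M1 := hLkM1 ▸ hhLk
    rw [hM1rep] at hhM1
    rcases (by simpa using hhM1 : h = al ∨ h = bep ∨ h = om) with rfl | rfl | rfl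
    · exact adjalh.ne rfl
    · exact hbeph rfl
    · rcases hxom2 c adjxc (adj_of_line N hLh hcLh hhLh hhc.symm) with h1 | h1
      · exact hcal h1
      · exact hcbe h1
  have hbepLk : bep ∉ Lk := by
    have hrep : Lk = {al, h, n} :=
      line_eq_of_three N hord hLk halLk hhLk hnLk adjalh.ne hnal.symm hnh.symm
    rw [hrep]
    intro hmem
    rcases (by simpa using hmem : bep = al ∨ bep = h ∨ bep = n) with h1 | h1 | h1
    · exact nalbep h1.symm
    · exact hbeph h1
    · exact hbepn h1
  have dbepal : dd N bep al = 1 := (d1adj N).2 adjalbep.symm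
  have dbeph : dd N bep h = 2 := by
    obtain ⟨m, hm, hspec⟩ := near_pattern N bep hLk
    have hrep : Lk = {al, h, n} :=
      line_eq_of_three N hord hLk halLk hhLk hnLk adjalh.ne hnal.symm hnh.symm
    rw [hrep] at hm
    rcases (by simpa using hm : m = al ∨ m = h ∨ m = n) with rfl | rfl | rfl
    · have := hspec h hhLk (fun heq => adjalh.ne heq.symm)
      rw [this, dbepal]
    · exfalso
      have h1 := hspec al halLk (fun heq => adjalh.ne heq)
      have h2 : dd N bep m = 0 := by omega
      exact hbeph ((deq0 N).1 h2)
    · exfalso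
      have h1 := hspec al halLk hnal.symm
      have h2 : dd N bep m = 0 := by omega
      exact hbepLk (((deq0 N).1 h2) ▸ hnLk)
  have adjbepc : adj N bep c :=
    two_two N hord hLh halpLh hhLh hcLh hhalp.symm hadj.ne hhc dbepalp dbeph
  exact no_three_common N hord (ne_of_two' N dbeph) (ne_of_two' N dbc) hbal hcal
    adjbbep.symm adjbh adjbepc (adj_of_line N hLh hcLh hhLh hhc.symm)
    adjalbep.symm adjalh

end GridHelpers

section GridMain
variable (N : NearPolygon P 3)

set_option maxHeartbeats 2000000 in
lemma grid_main (hord : N.hasOrder 2 2) {x y a b : P} (hxy : dd N x y = 2) (hab : a ≠ b)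
    (hC : {e | dd N x e = 1 ∧ adj N e y} = {a, b}) :
    ∃ Q : Set P, IsQuad N.Lines Q ∧ x ∈ Q ∧ y ∈ Q ∧
      (∀ Q', IsQuad N.Lines Q' → x ∈ Q' → y ∈ Q' → Q' = Q) ∧
      {z | z ∈ Q ∧ dd N x z = 2}.ncard = 4 := by
  have haC : a ∈ {e | dd N x e = 1 ∧ adj N e y} := by rw [hC]; simp
  have hbC : b ∈ {e | dd N x e = 1 ∧ adj N e y} := by rw [hC]; simp
  obtain ⟨dxa, adjay⟩ := haC
  obtain ⟨dxb, adjby⟩ := hbC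
  have adjxa : adj N x a := (d1adj N).1 dxa
  have adjxb : adj N x b := (d1adj N).1 dxb
  have hCmem : ∀ e, adj N x e → adj N e y → e = a ∨ e = b := by
    intro e h1 h2
    have : e ∈ {e | dd N x e = 1 ∧ adj N e y} := ⟨(d1adj N).2 h1, h2⟩
    rw [hC] at this
    simpa using this
  have dyx : dd N y x = 2 := by rw [dcomm]; exact hxy
  have dya : dd N y a = 1 := (d1adj N).2 adjay.symm
  have dyb : dd N y b = 1 := (d1adj N).2 adjby.symm
  -- lines
  obtain ⟨A, al, hA, hxA, haA, halA, halx, hala⟩ := third_point N hord adjxa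
  obtain ⟨B, be, hB, hxB, hbB, hbeB, hbex, hbeb⟩ := third_point N hord adjxb
  obtain ⟨A', alp, hA', haA', hyA', halpA', halpa, halpy⟩ := third_point N hord adjay
  obtain ⟨B', bep, hB', hbB', hyB', hbepB', hbepb, hbepy⟩ := third_point N hord adjby
  have dxal : dd N x al = 1 := mem_line_dist N hA hxA halA halx
  have dxbe : dd N x be = 1 := mem_line_dist N hB hxB hbeB hbex
  have daal : dd N a al = 1 := mem_line_dist N hA haA halA hala
  have dbbe : dd N b be = 1 := mem_line_dist N hB hbB hbeB hbeb
  have dyalp : dd N y alp = 1 := mem_line_dist N hA' hyA' halpA' halpy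
  have dybep : dd N y bep = 1 := mem_line_dist N hB' hyB' hbepB' hbepy
  have daalp : dd N a alp = 1 := mem_line_dist N hA' haA' halpA' halpa
  have dbbep : dd N b bep = 1 := mem_line_dist N hB' hbB' hbepB' hbepb
  have dyal : dd N y al = 2 :=
    one_two N hord hA haA hxA halA adjxa.ne.symm hala.symm halx.symm dya dyx
  have dybe : dd N y be = 2 :=
    one_two N hord hB hbB hxB hbeB adjxb.ne.symm hbeb.symm hbex.symm dyb dyx
  have dxalp : dd N x alp = 2 :=
    one_two N hord hA' haA' hyA' halpA' adjay.ne halpa.symm halpy.symm dxa hxy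
  have dxbep : dd N x bep = 2 :=
    one_two N hord hB' hbB' hyB' hbepB' adjby.ne hbepb.symm hbepy.symm dxb hxy
  have hArep : A = {x, a, al} :=
    line_eq_of_three N hord hA hxA haA halA adjxa.ne halx.symm hala.symm
  have hBrep : B = {x, b, be} :=
    line_eq_of_three N hord hB hxB hbB hbeB adjxb.ne hbex.symm hbeb.symm
  have hA'rep : A' = {a, y, alp} :=
    line_eq_of_three N hord hA' haA' hyA' halpA' adjay.ne halpa.symm halpy.symm
  have hB'rep : B' = {b, y, bep} :=
    line_eq_of_three N hord hB' hbB' hyB' hbepB' adjby.ne hbepb.symm hbepy.symm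
  have hAB : A ≠ B := by
    intro h
    have hmem : b ∈ A := h ▸ hbB
    rw [hArep] at hmem
    rcases (by simpa using hmem : b = x ∨ b = a ∨ b = al) with rfl | rfl | rfl
    · exact adjxb.ne rfl
    · exact hab rfl
    · rw [dyal] at dyb; omega
  have hA'B' : A' ≠ B' := by
    intro h
    have hmem : b ∈ A' := h ▸ hbB'
    rw [hA'rep] at hmem
    rcases (by simpa using hmem : b = a ∨ b = y ∨ b = alp) with rfl | rfl | rfl
    · exact hab rfl
    · exact adjby.ne rfl
    · rw [dxalp] at dxb; omega
  have hxpair : ∀ {u v : P} {Lu Lv : Set P}, Lu ∈ N.Lines → Lv ∈ N.Lines → x ∈ Lu → x ∈ Lv →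
      u ∈ Lu → v ∈ Lv → Lu ≠ Lv → u ≠ x → v ≠ x → dd N u v = 2 := by
    intro u v Lu Lv hLu hLv hxLu hxLv huLu hvLv hne hux hvx
    have hnadj := nonadj N hord hLu hLv hxLu hxLv huLu hvLv hne hux hvx
    have hne2 : u ≠ v := ne_pts_of_lines N hLu hLv hne hxLu hxLv huLu hvLv hux
    exact dist2_via N (adj_of_line N hLu huLu hxLu hux)
      (adj_of_line N hLv hxLv hvLv (Ne.symm hvx)) hne2 hnadj
  have dab : dd N a b = 2 := hxpair hA hB hxA hxB haA hbB hAB adjxa.ne.symm adjxb.ne.symm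
  have dabe : dd N a be = 2 := hxpair hA hB hxA hxB haA hbeB hAB adjxa.ne.symm hbex
  have dalb : dd N al b = 2 := hxpair hA hB hxA hxB halA hbB hAB halx adjxb.ne.symm
  have dalbe : dd N al be = 2 := hxpair hA hB hxA hxB halA hbeB hAB halx hbex
  have hya : y ≠ a := fun h => adjay.ne h.symm
  have hyb : y ≠ b := fun h => adjby.ne h.symm
  have hypair : ∀ {u v : P} {Lu Lv : Set P}, Lu ∈ N.Lines → Lv ∈ N.Lines → y ∈ Lu → y ∈ Lv →
      u ∈ Lu → v ∈ Lv → Lu ≠ Lv → u ≠ y → v ≠ y → dd N u v = 2 := by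
    intro u v Lu Lv hLu hLv hxLu hxLv huLu hvLv hne hux hvx
    have hnadj := nonadj N hord hLu hLv hxLu hxLv huLu hvLv hne hux hvx
    have hne2 : u ≠ v := ne_pts_of_lines N hLu hLv hne hxLu hxLv huLu hvLv hux
    exact dist2_via N (adj_of_line N hLu huLu hxLu hux)
      (adj_of_line N hLv hxLv hvLv (Ne.symm hvx)) hne2 hnadj
  have dabep : dd N a bep = 2 :=
    hypair hA' hB' hyA' hyB' haA' hbepB' hA'B' adjay.ne hbepy
  have dalpb : dd N alp b = 2 :=
    hypair hA' hB' hyA' hyB' halpA' hbB' hA'B' halpy adjby.ne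
  have dalpbep : dd N alp bep = 2 :=
    hypair hA' hB' hyA' hyB' halpA' hbepB' hA'B' halpy hbepy
  have dalY : dd N al y = 2 := by rw [dcomm]; exact dyal
  have dbeY : dd N be y = 2 := by rw [dcomm]; exact dybe
  have adjalbep : adj N al bep :=
    two_two N hord hB' hyB' hbB' hbepB' hyb hbepy.symm hbepb.symm dalY dalb
  have adjbealp : adj N be alp := by
    refine two_two N hord hA' hyA' haA' halpA' hya halpy.symm halpa.symm dbeY ?_
    rw [dcomm]; exact dabe
  have dalalp : dd N al alp = 2 := by
    refine one_two N hord hA' haA' hyA' halpA' adjay.ne halpa.symm halpy.symm ?_ dalY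
    rw [dcomm]; exact daal
  have dbebep : dd N be bep = 2 := by
    refine one_two N hord hB' hbB' hyB' hbepB' adjby.ne hbepb.symm hbepy.symm ?_ dbeY
    rw [dcomm]; exact dbbe
  -- the ninth point om
  obtain ⟨M1, om, hM1, halM1, hbepM1, homM1, homal, hombep⟩ := third_point N hord adjalbep
  have halbep : al ≠ bep := ne_of_dist N dxal dxbep (by omega)
  have dxom : dd N x om = 2 :=
    one_two N hord hM1 halM1 hbepM1 homM1 halbep homal.symm hombep.symm dxal dxbep
  have dyom : dd N y om = 2 :=
    one_two N hord hM1 hbepM1 halM1 homM1 halbep.symm hombep.symm homal.symm dybep dyal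
  have daom : dd N a om = 2 :=
    one_two N hord hM1 halM1 hbepM1 homM1 halbep homal.symm hombep.symm daal dabep
  have dbom : dd N b om = 2 := by
    refine one_two N hord hM1 hbepM1 halM1 homM1 halbep.symm hombep.symm homal.symm dbbep ?_
    rw [dcomm]; exact dalb
  have adjombe : adj N om be := by
    refine two_two N hord hB hxB hbB hbeB adjxb.ne hbex.symm hbeb.symm ?_ ?_
    · rw [dcomm]; exact dxom
    · rw [dcomm]; exact dbom
  have adjomalp : adj N om alp := by
    refine two_two N hord hA' haA' hyA' halpA' adjay.ne halpa.symm halpy.symm ?_ ?_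
    · rw [dcomm]; exact daom
    · rw [dcomm]; exact dyom
  -- merge: the line through be and alp contains om
  obtain ⟨M2, w2, hM2, hbeM2, halpM2, hw2M2, hw2be, hw2alp⟩ := third_point N hord adjbealp
  have hbealp : be ≠ alp := ne_of_dist N dxbe dxalp (by omega)
  have hw2om : om = w2 := by
    refine one_one N hord hM2 hbeM2 halpM2 hw2M2 hbealp hw2be.symm hw2alp.symm ?_ ?_
    · exact (d1adj N).2 adjombe
    · exact (d1adj N).2 adjomalp
  subst hw2om
  rename' hw2M2 => homM2, hw2be => hombe, hw2alp => homalp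
  have hM1rep : M1 = {al, bep, om} :=
    line_eq_of_three N hord hM1 halM1 hbepM1 homM1 halbep homal.symm hombep.symm
  have hM2rep : M2 = {be, alp, om} :=
    line_eq_of_three N hord hM2 hbeM2 halpM2 homM2 hbealp hombe.symm homalp.symm
  -- adjacency shorthands
  have adjxal : adj N x al := (d1adj N).1 dxal
  have adjxbe : adj N x be := (d1adj N).1 dxbe
  have adjaal : adj N a al := (d1adj N).1 daal
  have adjbbe : adj N b be := (d1adj N).1 dbbe
  have adjyalp : adj N y alp := (d1adj N).1 dyalp
  have adjybep : adj N y bep := (d1adj N).1 dybep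
  have adjaalp : adj N a alp := (d1adj N).1 daalp
  have adjbbep : adj N b bep := (d1adj N).1 dbbep
  have adjalom : adj N al om := adj_of_line N hM1 halM1 homM1 homal.symm
  have adjbepom : adj N bep om := adj_of_line N hM1 hbepM1 homM1 hombep.symm
  have adjbeom : adj N be om := adjombe.symm
  have adjalpom : adj N alp om := adjomalp.symm
  -- point inequalities
  have nxy : x ≠ y := ne_of_two' N hxy
  have nxalp : x ≠ alp := ne_of_two' N dxalp
  have nxbep : x ≠ bep := ne_of_two' N dxbep
  have nxom : x ≠ om := ne_of_two' N dxom
  have nabe : a ≠ be := ne_of_dist N dya dybe (by omega)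
  have nbal : b ≠ al := ne_of_dist N dyb dyal (by omega)
  have nalbe : al ≠ be := ne_pts_of_lines N hA hB hAB hxA hxB halA hbeB halx
  have nyal : y ≠ al := ne_of_two' N dyal
  have nalalp : al ≠ alp := ne_of_two' N dalalp
  have nabep : a ≠ bep := ne_of_dist N dxa dxbep (by omega)
  have naom : a ≠ om := ne_of_dist N dxa dxom (by omega)
  have nybe : y ≠ be := ne_of_two' N dybe
  have nbebep : be ≠ bep := ne_of_two' N dbebep
  have nbalp : b ≠ alp := ne_of_dist N dxb dxalp (by omega)
  have nbom : b ≠ om := ne_of_dist N dxb dxom (by omega)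
  have nalpbep : alp ≠ bep := ne_of_dist N daalp dabep (by omega)
  have nyom : y ≠ om := ne_of_two' N dyom
  -- the grid
  set Qs : Set P := {x, a, al, b, be, y, alp, bep, om} with hQdef
  have hxQ : x ∈ Qs := by rw [hQdef]; simp
  have haQ : a ∈ Qs := by rw [hQdef]; simp
  have halQ : al ∈ Qs := by rw [hQdef]; simp
  have hbQ : b ∈ Qs := by rw [hQdef]; simp
  have hbeQ : be ∈ Qs := by rw [hQdef]; simp
  have hyQ : y ∈ Qs := by rw [hQdef]; simp
  have halpQ : alp ∈ Qs := by rw [hQdef]; simp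
  have hbepQ : bep ∈ Qs := by rw [hQdef]; simp
  have homQ : om ∈ Qs := by rw [hQdef]; simp
  have hAsub : A ⊆ Qs := by
    rw [hArep]; rintro w (rfl | rfl | rfl) <;> assumption
  have hBsub : B ⊆ Qs := by
    rw [hBrep]; rintro w (rfl | rfl | rfl) <;> assumption
  have hA'sub : A' ⊆ Qs := by
    rw [hA'rep]; rintro w (rfl | rfl | rfl) <;> assumption
  have hB'sub : B' ⊆ Qs := by
    rw [hB'rep]; rintro w (rfl | rfl | rfl) <;> assumption
  have hM1sub : M1 ⊆ Qs := by
    rw [hM1rep]; rintro w (rfl | rfl | rfl) <;> assumption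
  have hM2sub : M2 ⊆ Qs := by
    rw [hM2rep]; rintro w (rfl | rfl | rfl) <;> assumption
  have hpairs : ∀ u ∈ Qs, ∀ v ∈ Qs, u = v ∨ adj N u v ∨ (dd N u v = 2 ∧
      ∃ w1, w1 ∈ Qs ∧ ∃ w2, w2 ∈ Qs ∧ w1 ≠ w2 ∧
      ∀ e, adj N u e → adj N e v → e = w1 ∨ e = w2) := by
    have mk : ∀ {u v w1 w2 : P}, dd N u v = 2 → w1 ∈ Qs → w2 ∈ Qs → w1 ≠ w2 →
        adj N u w1 → adj N w1 v → adj N u w2 → adj N w2 v →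
        (u = v ∨ adj N u v ∨ (dd N u v = 2 ∧ ∃ w1, w1 ∈ Qs ∧ ∃ w2, w2 ∈ Qs ∧ w1 ≠ w2 ∧
        ∀ e, adj N u e → adj N e v → e = w1 ∨ e = w2)) := by
      intro u v w1 w2 hd hw1 hw2 hne h1 h2 h3 h4
      exact Or.inr (Or.inr ⟨hd, w1, hw1, w2, hw2, hne,
        common_two N hord (ne_of_two' N hd) h1 h2 h3 h4 hne⟩)
    intro u hu v hv
    rw [hQdef] at hu hv
    simp only [Set.mem_insert_iff, Set.mem_singleton_iff] at hu hv
    rcases hu with rfl | rfl | rfl | rfl | rfl | rfl | rfl | rfl | rfl <;>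
      rcases hv with rfl | rfl | rfl | rfl | rfl | rfl | rfl | rfl | rfl
    · exact Or.inl rfl
    · exact Or.inr (Or.inl adjxa)
    · exact Or.inr (Or.inl adjxal)
    · exact Or.inr (Or.inl adjxb)
    · exact Or.inr (Or.inl adjxbe)
    · exact mk hxy haQ hbQ hab adjxa adjay adjxb adjby
    · exact mk dxalp haQ hbeQ nabe adjxa adjaalp adjxbe adjbealp
    · exact mk dxbep hbQ halQ nbal adjxb adjbbep adjxal adjalbep
    · exact mk dxom halQ hbeQ nalbe adjxal adjalom adjxbe adjbeom
    · exact Or.inr (Or.inl adjxa.symm)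
    · exact Or.inl rfl
    · exact Or.inr (Or.inl adjaal)
    · exact mk dab hxQ hyQ nxy adjxa.symm adjxb adjay adjby.symm
    · exact mk dabe hxQ halpQ nxalp adjxa.symm adjxbe adjaalp adjbealp.symm
    · exact Or.inr (Or.inl adjay)
    · exact Or.inr (Or.inl adjaalp)
    · exact mk dabep hyQ halQ nyal adjay adjybep adjaal adjalbep
    · exact mk daom halQ halpQ nalalp adjaal adjalom adjaalp adjalpom
    · exact Or.inr (Or.inl adjxal.symm)
    · exact Or.inr (Or.inl adjaal.symm)
    · exact Or.inl rfl
    · exact mk dalb hxQ hbepQ nxbep adjxal.symm adjxb adjalbep adjbbep.symm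
    · exact mk dalbe hxQ homQ nxom adjxal.symm adjxbe adjalom adjbeom.symm
    · exact mk (by rw [dcomm]; exact dyal) haQ hbepQ nabep adjaal.symm adjay adjalbep adjybep.symm
    · exact mk dalalp haQ homQ naom adjaal.symm adjaalp adjalom adjalpom.symm
    · exact Or.inr (Or.inl adjalbep)
    · exact Or.inr (Or.inl adjalom)
    · exact Or.inr (Or.inl adjxb.symm)
    · exact mk (by rw [dcomm]; exact dab) hxQ hyQ nxy adjxb.symm adjxa adjby adjay.symm
    · exact mk (by rw [dcomm]; exact dalb) hxQ hbepQ nxbep adjxb.symm adjxal adjbbep adjalbep.symm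
    · exact Or.inl rfl
    · exact Or.inr (Or.inl adjbbe)
    · exact Or.inr (Or.inl adjby)
    · exact mk (by rw [dcomm]; exact dalpb) hyQ hbeQ nybe adjby adjyalp adjbbe adjbealp
    · exact Or.inr (Or.inl adjbbep)
    · exact mk dbom hbeQ hbepQ nbebep adjbbe adjbeom adjbbep adjbepom
    · exact Or.inr (Or.inl adjxbe.symm)
    · exact mk (by rw [dcomm]; exact dabe) hxQ halpQ nxalp adjxbe.symm adjxa adjbealp adjaalp.symm
    · exact mk (by rw [dcomm]; exact dalbe) hxQ homQ nxom adjxbe.symm adjxal adjbeom adjalom.symm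
    · exact Or.inr (Or.inl adjbbe.symm)
    · exact Or.inl rfl
    · exact mk (by rw [dcomm]; exact dybe) hbQ halpQ nbalp adjbbe.symm adjby adjbealp adjyalp.symm
    · exact Or.inr (Or.inl adjbealp)
    · exact mk dbebep hbQ homQ nbom adjbbe.symm adjbbep adjbeom adjbepom.symm
    · exact Or.inr (Or.inl adjbeom)
    · exact mk (by rw [dcomm]; exact hxy) haQ hbQ hab adjay.symm adjxa.symm adjby.symm adjxb.symm
    · exact Or.inr (Or.inl adjay.symm)
    · exact mk dyal haQ hbepQ nabep adjay.symm adjaal adjybep adjalbep.symm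
    · exact Or.inr (Or.inl adjby.symm)
    · exact mk dybe hbQ halpQ nbalp adjby.symm adjbbe adjyalp adjbealp.symm
    · exact Or.inl rfl
    · exact Or.inr (Or.inl adjyalp)
    · exact Or.inr (Or.inl adjybep)
    · exact mk dyom halpQ hbepQ nalpbep adjyalp adjalpom adjybep adjbepom
    · exact mk (by rw [dcomm]; exact dxalp) haQ hbeQ nabe adjaalp.symm adjxa.symm adjbealp.symm adjxbe.symm
    · exact Or.inr (Or.inl adjaalp.symm)
    · exact mk (by rw [dcomm]; exact dalalp) haQ homQ naom adjaalp.symm adjaal adjalpom adjalom.symm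
    · exact mk dalpb hyQ hbeQ nybe adjyalp.symm adjby.symm adjbealp.symm adjbbe.symm
    · exact Or.inr (Or.inl adjbealp.symm)
    · exact Or.inr (Or.inl adjyalp.symm)
    · exact Or.inl rfl
    · exact mk dalpbep hyQ homQ nyom adjyalp.symm adjybep adjalpom adjbepom.symm
    · exact Or.inr (Or.inl adjalpom)
    · exact mk (by rw [dcomm]; exact dxbep) hbQ halQ nbal adjbbep.symm adjxb.symm adjalbep.symm adjxal.symm
    · exact mk (by rw [dcomm]; exact dabep) hyQ halQ nyal adjybep.symm adjay.symm adjalbep.symm adjaal.symm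
    · exact Or.inr (Or.inl adjalbep.symm)
    · exact Or.inr (Or.inl adjbbep.symm)
    · exact mk (by rw [dcomm]; exact dbebep) hbQ homQ nbom adjbbep.symm adjbbe adjbepom adjbeom.symm
    · exact Or.inr (Or.inl adjybep.symm)
    · exact mk (by rw [dcomm]; exact dalpbep) hyQ homQ nyom adjybep.symm adjyalp adjbepom adjalpom.symm
    · exact Or.inl rfl
    · exact Or.inr (Or.inl adjbepom)
    · exact mk (by rw [dcomm]; exact dxom) halQ hbeQ nalbe adjalom.symm adjxal.symm adjbeom.symm adjxbe.symm
    · exact mk (by rw [dcomm]; exact daom) halQ halpQ nalalp adjalom.symm adjaal.symm adjalpom.symm adjaalp.symm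
    · exact Or.inr (Or.inl adjalom.symm)
    · exact mk (by rw [dcomm]; exact dbom) hbeQ hbepQ nbebep adjbeom.symm adjbbe.symm adjbepom.symm adjbbep.symm
    · exact Or.inr (Or.inl adjbeom.symm)
    · exact mk (by rw [dcomm]; exact dyom) halpQ hbepQ nalpbep adjalpom.symm adjyalp.symm adjbepom.symm adjybep.symm
    · exact Or.inr (Or.inl adjalpom.symm)
    · exact Or.inr (Or.inl adjbepom.symm)
    · exact Or.inl rfl
  have hline : ∀ u ∈ Qs, ∀ v ∈ Qs, u ≠ v → ∀ L, L ∈ N.Lines → u ∈ L → v ∈ L → L ⊆ Qs := by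
    intro u hu v hv hne L hL huL hvL
    rw [hQdef] at hu hv
    simp only [Set.mem_insert_iff, Set.mem_singleton_iff] at hu hv
    rcases hu with rfl | rfl | rfl | rfl | rfl | rfl | rfl | rfl | rfl <;>
      rcases hv with rfl | rfl | rfl | rfl | rfl | rfl | rfl | rfl | rfl
    · exact absurd rfl hne
    · rw [line_unique' N hL hA hne huL hvL hxA haA]; exact hAsub
    · rw [line_unique' N hL hA hne huL hvL hxA halA]; exact hAsub
    · rw [line_unique' N hL hB hne huL hvL hxB hbB]; exact hBsub
    · rw [line_unique' N hL hB hne huL hvL hxB hbeB]; exact hBsub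
    · exact absurd (adj_of_line N hL huL hvL hne) (fun hadj => noadj_of_two N hxy hadj)
    · exact absurd (adj_of_line N hL huL hvL hne) (fun hadj => noadj_of_two N dxalp hadj)
    · exact absurd (adj_of_line N hL huL hvL hne) (fun hadj => noadj_of_two N dxbep hadj)
    · exact absurd (adj_of_line N hL huL hvL hne) (fun hadj => noadj_of_two N dxom hadj)
    · rw [line_unique' N hL hA hne huL hvL haA hxA]; exact hAsub
    · exact absurd rfl hne
    · rw [line_unique' N hL hA hne huL hvL haA halA]; exact hAsub
    · exact absurd (adj_of_line N hL huL hvL hne) (fun hadj => noadj_of_two N dab hadj)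
    · exact absurd (adj_of_line N hL huL hvL hne) (fun hadj => noadj_of_two N dabe hadj)
    · rw [line_unique' N hL hA' hne huL hvL haA' hyA']; exact hA'sub
    · rw [line_unique' N hL hA' hne huL hvL haA' halpA']; exact hA'sub
    · exact absurd (adj_of_line N hL huL hvL hne) (fun hadj => noadj_of_two N dabep hadj)
    · exact absurd (adj_of_line N hL huL hvL hne) (fun hadj => noadj_of_two N daom hadj)
    · rw [line_unique' N hL hA hne huL hvL halA hxA]; exact hAsub
    · rw [line_unique' N hL hA hne huL hvL halA haA]; exact hAsub
    · exact absurd rfl hne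
    · exact absurd (adj_of_line N hL huL hvL hne) (fun hadj => noadj_of_two N dalb hadj)
    · exact absurd (adj_of_line N hL huL hvL hne) (fun hadj => noadj_of_two N dalbe hadj)
    · exact absurd (adj_of_line N hL huL hvL hne) (fun hadj => noadj_of_two N (by rw [dcomm]; exact dyal) hadj)
    · exact absurd (adj_of_line N hL huL hvL hne) (fun hadj => noadj_of_two N dalalp hadj)
    · rw [line_unique' N hL hM1 hne huL hvL halM1 hbepM1]; exact hM1sub
    · rw [line_unique' N hL hM1 hne huL hvL halM1 homM1]; exact hM1sub
    · rw [line_unique' N hL hB hne huL hvL hbB hxB]; exact hBsub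
    · exact absurd (adj_of_line N hL huL hvL hne) (fun hadj => noadj_of_two N (by rw [dcomm]; exact dab) hadj)
    · exact absurd (adj_of_line N hL huL hvL hne) (fun hadj => noadj_of_two N (by rw [dcomm]; exact dalb) hadj)
    · exact absurd rfl hne
    · rw [line_unique' N hL hB hne huL hvL hbB hbeB]; exact hBsub
    · rw [line_unique' N hL hB' hne huL hvL hbB' hyB']; exact hB'sub
    · exact absurd (adj_of_line N hL huL hvL hne) (fun hadj => noadj_of_two N (by rw [dcomm]; exact dalpb) hadj)
    · rw [line_unique' N hL hB' hne huL hvL hbB' hbepB']; exact hB'sub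
    · exact absurd (adj_of_line N hL huL hvL hne) (fun hadj => noadj_of_two N dbom hadj)
    · rw [line_unique' N hL hB hne huL hvL hbeB hxB]; exact hBsub
    · exact absurd (adj_of_line N hL huL hvL hne) (fun hadj => noadj_of_two N (by rw [dcomm]; exact dabe) hadj)
    · exact absurd (adj_of_line N hL huL hvL hne) (fun hadj => noadj_of_two N (by rw [dcomm]; exact dalbe) hadj)
    · rw [line_unique' N hL hB hne huL hvL hbeB hbB]; exact hBsub
    · exact absurd rfl hne
    · exact absurd (adj_of_line N hL huL hvL hne) (fun hadj => noadj_of_two N (by rw [dcomm]; exact dybe) hadj)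
    · rw [line_unique' N hL hM2 hne huL hvL hbeM2 halpM2]; exact hM2sub
    · exact absurd (adj_of_line N hL huL hvL hne) (fun hadj => noadj_of_two N dbebep hadj)
    · rw [line_unique' N hL hM2 hne huL hvL hbeM2 homM2]; exact hM2sub
    · exact absurd (adj_of_line N hL huL hvL hne) (fun hadj => noadj_of_two N (by rw [dcomm]; exact hxy) hadj)
    · rw [line_unique' N hL hA' hne huL hvL hyA' haA']; exact hA'sub
    · exact absurd (adj_of_line N hL huL hvL hne) (fun hadj => noadj_of_two N dyal hadj)
    · rw [line_unique' N hL hB' hne huL hvL hyB' hbB']; exact hB'sub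
    · exact absurd (adj_of_line N hL huL hvL hne) (fun hadj => noadj_of_two N dybe hadj)
    · exact absurd rfl hne
    · rw [line_unique' N hL hA' hne huL hvL hyA' halpA']; exact hA'sub
    · rw [line_unique' N hL hB' hne huL hvL hyB' hbepB']; exact hB'sub
    · exact absurd (adj_of_line N hL huL hvL hne) (fun hadj => noadj_of_two N dyom hadj)
    · exact absurd (adj_of_line N hL huL hvL hne) (fun hadj => noadj_of_two N (by rw [dcomm]; exact dxalp) hadj)
    · rw [line_unique' N hL hA' hne huL hvL halpA' haA']; exact hA'sub
    · exact absurd (adj_of_line N hL huL hvL hne) (fun hadj => noadj_of_two N (by rw [dcomm]; exact dalalp) hadj)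
    · exact absurd (adj_of_line N hL huL hvL hne) (fun hadj => noadj_of_two N dalpb hadj)
    · rw [line_unique' N hL hM2 hne huL hvL halpM2 hbeM2]; exact hM2sub
    · rw [line_unique' N hL hA' hne huL hvL halpA' hyA']; exact hA'sub
    · exact absurd rfl hne
    · exact absurd (adj_of_line N hL huL hvL hne) (fun hadj => noadj_of_two N dalpbep hadj)
    · rw [line_unique' N hL hM2 hne huL hvL halpM2 homM2]; exact hM2sub
    · exact absurd (adj_of_line N hL huL hvL hne) (fun hadj => noadj_of_two N (by rw [dcomm]; exact dxbep) hadj)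
    · exact absurd (adj_of_line N hL huL hvL hne) (fun hadj => noadj_of_two N (by rw [dcomm]; exact dabep) hadj)
    · rw [line_unique' N hL hM1 hne huL hvL hbepM1 halM1]; exact hM1sub
    · rw [line_unique' N hL hB' hne huL hvL hbepB' hbB']; exact hB'sub
    · exact absurd (adj_of_line N hL huL hvL hne) (fun hadj => noadj_of_two N (by rw [dcomm]; exact dbebep) hadj)
    · rw [line_unique' N hL hB' hne huL hvL hbepB' hyB']; exact hB'sub
    · exact absurd (adj_of_line N hL huL hvL hne) (fun hadj => noadj_of_two N (by rw [dcomm]; exact dalpbep) hadj)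
    · exact absurd rfl hne
    · rw [line_unique' N hL hM1 hne huL hvL hbepM1 homM1]; exact hM1sub
    · exact absurd (adj_of_line N hL huL hvL hne) (fun hadj => noadj_of_two N (by rw [dcomm]; exact dxom) hadj)
    · exact absurd (adj_of_line N hL huL hvL hne) (fun hadj => noadj_of_two N (by rw [dcomm]; exact daom) hadj)
    · rw [line_unique' N hL hM1 hne huL hvL homM1 halM1]; exact hM1sub
    · exact absurd (adj_of_line N hL huL hvL hne) (fun hadj => noadj_of_two N (by rw [dcomm]; exact dbom) hadj)
    · rw [line_unique' N hL hM2 hne huL hvL homM2 hbeM2]; exact hM2sub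
    · exact absurd (adj_of_line N hL huL hvL hne) (fun hadj => noadj_of_two N (by rw [dcomm]; exact dyom) hadj)
    · rw [line_unique' N hL hM2 hne huL hvL homM2 halpM2]; exact hM2sub
    · rw [line_unique' N hL hM1 hne huL hvL homM1 hbepM1]; exact hM1sub
    · exact absurd rfl hne
  -- distances within the grid are at most two
  have hdiam : ∀ u ∈ Qs, ∀ v ∈ Qs, dd N u v ≤ 2 := by
    intro u hu v hv
    rcases hpairs u hu v hv with rfl | h | ⟨h, -⟩
    · rw [dself]; omega
    · rw [(d1adj N).2 h]; omega
    · omega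
  -- the generic generalized-quadrangle property
  have hgq : ∀ u ∈ Qs, ∀ L ∈ N.Lines, L ⊆ Qs → u ∉ L →
      ∃! w, w ∈ L ∧ adj N u w := by
    intro u hu L hL hLQ huL
    obtain ⟨m, hm, hspec⟩ := near_pattern N u hL
    have hm0 : dd N u m ≠ 0 := fun h => huL (((deq0 N).1 h) ▸ hm)
    obtain ⟨z1, hz1, z2, hz2, hz12⟩ := N.two_pts L hL
    have hzother : ∃ z ∈ L, z ≠ m := by
      by_cases h : z1 = m
      · exact ⟨z2, hz2, by rw [← h]; exact Ne.symm hz12⟩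
      · exact ⟨z1, hz1, h⟩
    obtain ⟨z0, hz0L, hz0m⟩ := hzother
    have hle1 : dd N u z0 ≤ 2 := hdiam u hu z0 (hLQ hz0L)
    have hz0d := hspec z0 hz0L hz0m
    have hm1 : dd N u m = 1 := by omega
    refine ⟨m, ⟨hm, (d1adj N).1 hm1⟩, ?_⟩
    rintro w ⟨hwL, hwadj⟩
    by_contra hwm
    have := hspec w hwL hwm
    have := (d1adj N).2 hwadj
    omega
  -- convexity
  have hconvex : ∀ u ∈ Qs, ∀ v ∈ Qs, ∀ z : P,
      dd N u z + dd N z v = dd N u v → z ∈ Qs := by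
    intro u hu v hv z heq
    rcases hpairs u hu v hv with rfl | hadj | ⟨hd2, w1, hw1, w2, hw2, hne, hcom⟩
    · have h0 : dd N u u = 0 := dself N u
      have h1 : dd N u z = 0 := by omega
      exact ((deq0 N).1 h1) ▸ hu
    · have h1 : dd N u v = 1 := (d1adj N).2 hadj
      rcases (show dd N u z = 0 ∨ dd N z v = 0 by omega) with h | h
      · exact ((deq0 N).1 h) ▸ hu
      · have : z = v := ((deq0 N).1 h)
        exact this ▸ hv
    · rw [hd2] at heq
      rcases (show dd N u z = 0 ∨ dd N z v = 0 ∨ (dd N u z = 1 ∧ dd N z v = 1) by omega)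
        with h | h | ⟨h1, h2⟩
      · exact ((deq0 N).1 h) ▸ hu
      · exact ((deq0 N).1 h) ▸ hv
      · rcases hcom z ((d1adj N).1 h1) ((d1adj N).1 h2) with rfl | rfl
        · exact hw1
        · exact hw2
  -- additional line distinctions
  have hnm : ∀ {u p q s : P}, u ≠ p → u ≠ q → u ≠ s → u ∉ ({p, q, s} : Set P) := by
    intro u p q s h1 h2 h3 hm
    simp only [Set.mem_insert_iff, Set.mem_singleton_iff] at hm
    tauto
  have hAA' : A ≠ A' := (ne_line_of hyA' (by rw [hArep]; exact hnm nxy.symm hya nyal)).symm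
  have hAM1 : A ≠ M1 :=
    (ne_line_of hbepM1 (by rw [hArep]; exact hnm nxbep.symm nabep.symm halbep.symm)).symm
  have hBB' : B ≠ B' := (ne_line_of hyB' (by rw [hBrep]; exact hnm nxy.symm hyb nybe)).symm
  have hBM2 : B ≠ M2 :=
    (ne_line_of halpM2 (by rw [hBrep]; exact hnm nxalp.symm nbalp.symm hbealp.symm)).symm
  have hA'M2 : A' ≠ M2 :=
    (ne_line_of hbeM2 (by rw [hA'rep]; exact hnm nabe.symm nybe.symm hbealp)).symm
  have hB'M1 : B' ≠ M1 :=
    (ne_line_of halM1 (by rw [hB'rep]; exact hnm nbal.symm nyal.symm halbep)).symm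
  have hM1M2 : M1 ≠ M2 :=
    ne_line_of halM1 (by rw [hM2rep]; exact hnm nalbe nalalp homal.symm)
  -- two lines through each point
  have htwo : ∀ u ∈ Qs, ∃ L₁ ∈ N.Lines, ∃ L₂ ∈ N.Lines,
      L₁ ⊆ Qs ∧ L₂ ⊆ Qs ∧ u ∈ L₁ ∧ u ∈ L₂ ∧ L₁ ≠ L₂ := by
    intro u hu
    rw [hQdef] at hu
    simp only [Set.mem_insert_iff, Set.mem_singleton_iff] at hu
    rcases hu with rfl | rfl | rfl | rfl | rfl | rfl | rfl | rfl | rfl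
    · exact ⟨A, hA, B, hB, hAsub, hBsub, hxA, hxB, hAB⟩
    · exact ⟨A, hA, A', hA', hAsub, hA'sub, haA, haA', hAA'⟩
    · exact ⟨A, hA, M1, hM1, hAsub, hM1sub, halA, halM1, hAM1⟩
    · exact ⟨B, hB, B', hB', hBsub, hB'sub, hbB, hbB', hBB'⟩
    · exact ⟨B, hB, M2, hM2, hBsub, hM2sub, hbeB, hbeM2, hBM2⟩
    · exact ⟨A', hA', B', hB', hA'sub, hB'sub, hyA', hyB', hA'B'⟩
    · exact ⟨A', hA', M2, hM2, hA'sub, hM2sub, halpA', halpM2, hA'M2⟩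
    · exact ⟨B', hB', M1, hM1, hB'sub, hM1sub, hbepB', hbepM1, hB'M1⟩
    · exact ⟨M1, hM1, M2, hM2, hM1sub, hM2sub, homM1, homM2, hM1M2⟩
  -- the common-neighbour sets of x with om
  have hxom2 : ∀ e, adj N x e → adj N e om → e = al ∨ e = be :=
    common_two N hord nxom adjxal adjalom adjxbe adjbeom nalbe
  have hxom2' : ∀ e, adj N x e → adj N e om → e = be ∨ e = al :=
    common_two N hord nxom adjxbe adjbeom adjxal adjalom nalbe.symm
  -- UNIQUENESS
  have huniq : ∀ Q', IsQuad N.Lines Q' → x ∈ Q' → y ∈ Q' → Q' = Qs := by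
    intro Q' hQ' hxQ' hyQ'
    have haQ' : a ∈ Q' := by
      refine hQ'.1.2 x hxQ' y hyQ' a ?_
      show dd N x a + dd N a y = dd N x y
      rw [dxa, (d1adj N).2 adjay, hxy]
    have hbQ' : b ∈ Q' := by
      refine hQ'.1.2 x hxQ' y hyQ' b ?_
      show dd N x b + dd N b y = dd N x y
      rw [dxb, (d1adj N).2 adjby, hxy]
    have hsub' := hQ'.1.1
    have hAQ' : A ⊆ Q' := hsub' A hA x hxA a haA adjxa.ne hxQ' haQ'
    have hBQ' : B ⊆ Q' := hsub' B hB x hxB b hbB adjxb.ne hxQ' hbQ'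
    have hA'Q' : A' ⊆ Q' := hsub' A' hA' a haA' y hyA' adjay.ne haQ' hyQ'
    have hB'Q' : B' ⊆ Q' := hsub' B' hB' b hbB' y hyB' adjby.ne hbQ' hyQ'
    have halQ' : al ∈ Q' := hAQ' halA
    have hbeQ' : be ∈ Q' := hBQ' hbeB
    have halpQ' : alp ∈ Q' := hA'Q' halpA'
    have hbepQ' : bep ∈ Q' := hB'Q' hbepB'
    have hM1Q' : M1 ⊆ Q' := hsub' M1 hM1 al halM1 bep hbepM1 halbep halQ' hbepQ'
    have homQ' : om ∈ Q' := hM1Q' homM1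
    -- neighbours of x inside Q' are exactly a, al, b, be
    have hone : ∀ z, z ∈ Q' → adj N x z → z = a ∨ z = al ∨ z = b ∨ z = be := by
      intro z hzQ' adjxz
      obtain ⟨L, t, hL, hxL, hzL, htL, htx, htz⟩ := third_point N hord adjxz
      by_cases hLA : L = A
      · subst hLA
        have hmem : z ∈ ({x, a, al} : Set P) := hArep ▸ hzL
        rcases (by simpa using hmem : z = x ∨ z = a ∨ z = al) with rfl | rfl | rfl
        · exact absurd rfl adjxz.ne
        · exact Or.inl rfl
        · exact Or.inr (Or.inl rfl)
      by_cases hLB : L = B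
      · subst hLB
        have hmem : z ∈ ({x, b, be} : Set P) := hBrep ▸ hzL
        rcases (by simpa using hmem : z = x ∨ z = b ∨ z = be) with rfl | rfl | rfl
        · exact absurd rfl adjxz.ne
        · exact Or.inr (Or.inr (Or.inl rfl))
        · exact Or.inr (Or.inr (Or.inr rfl))
      exfalso
      have hza : z ≠ a := fun heq =>
        hLA (line_unique' N hL hA adjxz.ne hxL hzL hxA (by rw [heq]; exact haA))
      have hzal : z ≠ al := fun heq =>
        hLA (line_unique' N hL hA adjxz.ne hxL hzL hxA (by rw [heq]; exact halA))
      have hzb : z ≠ b := fun heq =>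
        hLB (line_unique' N hL hB adjxz.ne hxL hzL hxB (by rw [heq]; exact hbB))
      have hzbe : z ≠ be := fun heq =>
        hLB (line_unique' N hL hB adjxz.ne hxL hzL hxB (by rw [heq]; exact hbeB))
      have dyz : dd N y z = 2 := by
        refine dist2 N ?_ ?_ (hQ'.2.1 y hyQ' z hzQ')
        · intro heq
          subst heq
          exact noadj_of_two N hxy adjxz
        · intro hadj
          rcases hCmem z adjxz hadj.symm with rfl | rfl
          · exact hza rfl
          · exact hzb rfl
      have daz : dd N a z = 2 := by
        have hnadj : ¬ adj N a z := by
          intro hadj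
          obtain ⟨Lz, t2, hLz, haLz, hzLz, ht2, ht2a, ht2z⟩ := third_point N hord hadj
          have hx2 : x = t2 :=
            one_one N hord hLz haLz hzLz ht2 hadj.ne ht2a.symm ht2z.symm dxa
              ((d1adj N).2 adjxz)
          have hxLz : x ∈ Lz := by rw [hx2]; exact ht2
          have hLzA : Lz = A := line_unique' N hLz hA adjxa.ne hxLz haLz hxA haA
          exact hLA (line_unique' N hL hA adjxz.ne hxL hzL hxA (hLzA ▸ hzLz))
        exact dist2_via N adjxa.symm adjxz (Ne.symm hza) hnadj
      have dbz : dd N b z = 2 := by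
        have hnadj : ¬ adj N b z := by
          intro hadj
          obtain ⟨Lz, t2, hLz, hbLz, hzLz, ht2, ht2b, ht2z⟩ := third_point N hord hadj
          have hx2 : x = t2 :=
            one_one N hord hLz hbLz hzLz ht2 hadj.ne ht2b.symm ht2z.symm dxb
              ((d1adj N).2 adjxz)
          have hxLz : x ∈ Lz := by rw [hx2]; exact ht2
          have hLzB : Lz = B := line_unique' N hLz hB adjxb.ne hxLz hbLz hxB hbB
          exact hLB (line_unique' N hL hB adjxz.ne hxL hzL hxB (hLzB ▸ hzLz))
        exact dist2_via N adjxb.symm adjxz (Ne.symm hzb) hnadj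
      have dalz : dd N al z = 2 := by
        have hnadj : ¬ adj N al z := by
          intro hadj
          obtain ⟨Lz, t2, hLz, halLz, hzLz, ht2, ht2al, ht2z⟩ := third_point N hord hadj
          have hx2 : x = t2 :=
            one_one N hord hLz halLz hzLz ht2 hadj.ne ht2al.symm ht2z.symm dxal
              ((d1adj N).2 adjxz)
          have hxLz : x ∈ Lz := by rw [hx2]; exact ht2
          have hLzA : Lz = A := line_unique' N hLz hA adjxal.ne hxLz halLz hxA halA
          exact hLA (line_unique' N hL hA adjxz.ne hxL hzL hxA (hLzA ▸ hzLz))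
        exact dist2_via N adjxal.symm adjxz (Ne.symm hzal) hnadj
      have dbez : dd N be z = 2 := by
        have hnadj : ¬ adj N be z := by
          intro hadj
          obtain ⟨Lz, t2, hLz, hbeLz, hzLz, ht2, ht2be, ht2z⟩ := third_point N hord hadj
          have hx2 : x = t2 :=
            one_one N hord hLz hbeLz hzLz ht2 hadj.ne ht2be.symm ht2z.symm dxbe
              ((d1adj N).2 adjxz)
          have hxLz : x ∈ Lz := by rw [hx2]; exact ht2
          have hLzB : Lz = B := line_unique' N hLz hB adjxbe.ne hxLz hbeLz hxB hbeB
          exact hLB (line_unique' N hL hB adjxz.ne hxL hzL hxB (hLzB ▸ hzLz))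
        exact dist2_via N adjxbe.symm adjxz (Ne.symm hzbe) hnadj
      have hno1 : adj N alp z → False := fun hadj =>
        alp_c_absurd N hord hM1 halM1 hbepM1 hM1rep halbep adjxz dxalp
          (by rw [dcomm]; exact dalpb) dbz dalalp dalz adjalbep
          (by rw [dcomm]; exact dalpbep) hxom2 hzal hzbe nbal adjbbep hadj
      have hno2 : adj N bep z → False := fun hadj =>
        alp_c_absurd N hord hM2 hbeM2 halpM2 hM2rep hbealp adjxz dxbep dabep daz
          dbebep dbez adjbealp dalpbep hxom2' hzbe hzal nabe adjaalp hadj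
      obtain ⟨w1, w2, hw12, hCyz, hw1Q', hw2Q', adjyw1, adjw1z, adjyw2, adjw2z⟩ :=
        quad_mu2 N hord hQ' hyQ' hzQ' dyz
      have hwlines : ∀ w, w ∈ Q' → adj N y w → adj N w z →
          ∃ Lw, Lw ∈ N.Lines ∧ y ∈ Lw ∧ w ∈ Lw ∧ Lw ≠ A' ∧ Lw ≠ B' := by
        intro w hwQ' adjyw adjwz
        have hnxw : ¬ adj N x w := by
          intro hxw
          rcases hCmem w hxw adjyw.symm with rfl | rfl
          · exact noadj_of_two N daz adjwz
          · exact noadj_of_two N dbz adjwz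
        obtain ⟨Lw, t3, hLw, hyLw, hwLw, -, -, -⟩ := third_point N hord adjyw
        refine ⟨Lw, hLw, hyLw, hwLw, ?_, ?_⟩
        · intro heq
          subst heq
          have hmem : w ∈ ({a, y, alp} : Set P) := hA'rep ▸ hwLw
          rcases (by simpa using hmem : w = a ∨ w = y ∨ w = alp) with rfl | rfl | rfl
          · exact hnxw adjxa
          · exact adjyw.ne rfl
          · exact hno1 adjwz
        · intro heq
          subst heq
          have hmem : w ∈ ({b, y, bep} : Set P) := hB'rep ▸ hwLw
          rcases (by simpa using hmem : w = b ∨ w = y ∨ w = bep) with rfl | rfl | rfl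
          · exact hnxw adjxb
          · exact adjyw.ne rfl
          · exact hno2 adjwz
      obtain ⟨L1w, hL1w, hyL1, hw1L1, h1A', h1B'⟩ := hwlines w1 hw1Q' adjyw1 adjw1z
      obtain ⟨L2w, hL2w, hyL2, hw2L2, h2A', h2B'⟩ := hwlines w2 hw2Q' adjyw2 adjw2z
      have hLL : L1w = L2w := third_line_unique N hord hA' hB' hyA' hyB' hA'B'
        hL1w hL2w hyL1 hyL2 h1A' h1B' h2A' h2B'
      rw [← hLL] at hw2L2
      have hzy : z = y :=
        one_one N hord hL1w hw1L1 hw2L2 hyL1 hw12 adjyw1.ne.symm adjyw2.ne.symm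
          ((d1adj N).2 adjw1z.symm) ((d1adj N).2 adjw2z.symm)
      exact (ne_of_two' N dyz) hzy.symm
    -- Q' is contained in the grid
    have hsubQ : Q' ⊆ Qs := by
      intro z hzQ'
      have hle : dd N x z ≤ 2 := hQ'.2.1 x hxQ' z hzQ'
      rcases (show dd N x z = 0 ∨ dd N x z = 1 ∨ dd N x z = 2 by omega) with h | h | h
      · exact ((deq0 N).1 h) ▸ hxQ
      · rcases hone z hzQ' ((d1adj N).1 h) with rfl | rfl | rfl | rfl
        exacts [haQ, halQ, hbQ, hbeQ]
      · obtain ⟨w1, w2, hw12, hCxz, hw1Q', hw2Q', adjxw1, adjw1z, adjxw2, adjw2z⟩ :=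
          quad_mu2 N hord hQ' hxQ' hzQ' h
        have hone1 := hone w1 hw1Q' adjxw1
        have hone2 := hone w2 hw2Q' adjxw2
        have honeline : ∀ {u v : P} {L : Set P}, L ∈ N.Lines → u ∈ L → v ∈ L → x ∈ L →
            u ≠ v → u ≠ x → v ≠ x → adj N u z → adj N v z → False := by
          intro u v L hL huL hvL hxL huv hux hvx h1 h2
          have hzx : z = x :=
            one_one N hord hL huL hvL hxL huv hux hvx ((d1adj N).2 h1.symm)
              ((d1adj N).2 h2.symm)
          rw [hzx, dself] at h
          omega
        have hcab : ∀ e, adj N a e → adj N e b → e = x ∨ e = y :=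
          common_two N hord hab adjxa.symm adjxb adjay adjby.symm nxy
        have hcabe : ∀ e, adj N a e → adj N e be → e = x ∨ e = alp :=
          common_two N hord nabe adjxa.symm adjxbe adjaalp adjbealp.symm nxalp
        have hcalb : ∀ e, adj N al e → adj N e b → e = x ∨ e = bep :=
          common_two N hord nbal.symm adjxal.symm adjxb adjalbep adjbbep.symm nxbep
        have hcalbe : ∀ e, adj N al e → adj N e be → e = x ∨ e = om :=
          common_two N hord nalbe adjxal.symm adjxbe adjalom adjbeom.symm nxom
        have hnzx : z ≠ x := (ne_of_two' N h).symm
        rcases hone1 with rfl | rfl | rfl | rfl <;> rcases hone2 with rfl | rfl | rfl | rfl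
        · exact absurd rfl hw12
        · exact absurd (honeline hA haA halA hxA (fun hh => hw12 hh)
            adjxa.ne.symm halx adjw1z adjw2z) not_false
        · rcases hcab z adjw1z adjw2z.symm with rfl | rfl
          · exact absurd rfl hnzx
          · exact hyQ
        · rcases hcabe z adjw1z adjw2z.symm with rfl | rfl
          · exact absurd rfl hnzx
          · exact halpQ
        · exact absurd (honeline hA halA haA hxA (fun hh => hw12 hh)
            halx adjxa.ne.symm adjw1z adjw2z) not_false
        · exact absurd rfl hw12
        · rcases hcalb z adjw1z adjw2z.symm with rfl | rfl
          · exact absurd rfl hnzx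
          · exact hbepQ
        · rcases hcalbe z adjw1z adjw2z.symm with rfl | rfl
          · exact absurd rfl hnzx
          · exact homQ
        · rcases hcab z adjw2z adjw1z.symm with rfl | rfl
          · exact absurd rfl hnzx
          · exact hyQ
        · rcases hcalb z adjw2z adjw1z.symm with rfl | rfl
          · exact absurd rfl hnzx
          · exact hbepQ
        · exact absurd rfl hw12
        · exact absurd (honeline hB hbB hbeB hxB (fun hh => hw12 hh)
            adjxb.ne.symm hbex adjw1z adjw2z) not_false
        · rcases hcabe z adjw2z adjw1z.symm with rfl | rfl
          · exact absurd rfl hnzx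
          · exact halpQ
        · rcases hcalbe z adjw2z adjw1z.symm with rfl | rfl
          · exact absurd rfl hnzx
          · exact homQ
        · exact absurd (honeline hB hbeB hbB hxB (fun hh => hw12 hh)
            hbex adjxb.ne.symm adjw1z adjw2z) not_false
        · exact absurd rfl hw12
    have hsupQ : Qs ⊆ Q' := by
      intro z hz
      rw [hQdef] at hz
      simp only [Set.mem_insert_iff, Set.mem_singleton_iff] at hz
      rcases hz with rfl | rfl | rfl | rfl | rfl | rfl | rfl | rfl | rfl
      exacts [hxQ', haQ', halQ', hbQ', hbeQ', hyQ', halpQ', hbepQ', homQ']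
    exact Set.Subset.antisymm hsubQ hsupQ
  -- the four points of the grid at distance two from x
  have hcount : {z | z ∈ Qs ∧ dd N x z = 2}.ncard = 4 := by
    have hset : {z | z ∈ Qs ∧ dd N x z = 2} = {y, alp, bep, om} := by
      ext z
      simp only [Set.mem_setOf_eq, Set.mem_insert_iff, Set.mem_singleton_iff]
      constructor
      · rintro ⟨hz, hd⟩
        rw [hQdef] at hz
        simp only [Set.mem_insert_iff, Set.mem_singleton_iff] at hz
        rcases hz with rfl | rfl | rfl | rfl | rfl | rfl | rfl | rfl | rfl
        · rw [dself] at hd; omega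
        · rw [dxa] at hd; omega
        · rw [dxal] at hd; omega
        · rw [dxb] at hd; omega
        · rw [dxbe] at hd; omega
        · exact Or.inl rfl
        · exact Or.inr (Or.inl rfl)
        · exact Or.inr (Or.inr (Or.inl rfl))
        · exact Or.inr (Or.inr (Or.inr rfl))
      · rintro (rfl | rfl | rfl | rfl)
        exacts [⟨hyQ, hxy⟩, ⟨halpQ, dxalp⟩, ⟨hbepQ, dxbep⟩, ⟨homQ, dxom⟩]
    rw [hset]
    exact ncard4' halpy.symm hbepy.symm nyom nalpbep (ne_of_dist N daalp daom (by omega))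
      (ne_of_dist N dbbep dbom (by omega))
  -- assemble everything
  refine ⟨Qs, ⟨⟨?_, hconvex⟩, hdiam, ⟨x, hxQ, y, hyQ, hxy⟩, hgq, htwo,
    ⟨x, hxQ, y, hyQ, nxy, fun hcontra => noadj_of_two N hxy hcontra⟩⟩, hxQ, hyQ, huniq, hcount⟩
  intro L hL u huL v hvL hne huQ hvQ
  exact hline u huQ v hvQ hne L hL huL hvL


end GridMain

section Final
variable (N : NearPolygon P 3)

lemma quad_count (hord : N.hasOrder 2 2) (x : P) :
    {z | dd N x z = 2 ∧ {e | dd N x e = 1 ∧ adj N e z}.ncard = 2}.ncard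
      = 4 * {Q : Set P | IsQuad N.Lines Q ∧ x ∈ Q}.ncard := by
  haveI : Finite P := finiteP N hord
  have hdom : ∀ w : P × Set P,
      w ∈ {w : P × Set P | (IsQuad N.Lines w.2 ∧ x ∈ w.2) ∧ w.1 ∈ w.2 ∧ dd N x w.1 = 2} →
      w.1 ∈ {z | dd N x z = 2 ∧ {e | dd N x e = 1 ∧ adj N e z}.ncard = 2} := by
    rintro ⟨z, Q⟩ ⟨⟨hQ, hxQ⟩, hzQ, hd⟩
    obtain ⟨w1, w2, hw12, hC, -⟩ := quad_mu2 N hord hQ hxQ hzQ hd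
    exact ⟨hd, by rw [hC]; exact Set.ncard_pair hw12⟩
  have h1 : {w : P × Set P | (IsQuad N.Lines w.2 ∧ x ∈ w.2) ∧ w.1 ∈ w.2 ∧ dd N x w.1 = 2}.ncard
      = 1 * {z | dd N x z = 2 ∧ {e | dd N x e = 1 ∧ adj N e z}.ncard = 2}.ncard := by
    refine count_pairs_fst _ _ 1 hdom ?_
    rintro z ⟨hd, hmu⟩
    obtain ⟨a, b, hab, hCab⟩ := Set.ncard_eq_two.1 hmu
    obtain ⟨Q0, hQ0, hxQ0, hzQ0, huniq, -⟩ := grid_main N hord hd hab hCab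
    have hconv : {b | (z, b) ∈
        {w : P × Set P | (IsQuad N.Lines w.2 ∧ x ∈ w.2) ∧ w.1 ∈ w.2 ∧ dd N x w.1 = 2}}
        = {Q0} := by
      ext Q
      simp only [Set.mem_setOf_eq, Set.mem_singleton_iff]
      constructor
      · rintro ⟨⟨hQ, hxQ⟩, hzQ, -⟩
        exact huniq Q hQ hxQ hzQ
      · rintro rfl
        exact ⟨⟨hQ0, hxQ0⟩, hzQ0, hd⟩
    rw [hconv]
    exact Set.ncard_singleton Q0
  have h2 : {w : P × Set P | (IsQuad N.Lines w.2 ∧ x ∈ w.2) ∧ w.1 ∈ w.2 ∧ dd N x w.1 = 2}.ncard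
      = 4 * {Q : Set P | IsQuad N.Lines Q ∧ x ∈ Q}.ncard := by
    refine count_pairs_snd _ _ 4 (fun w hw => hw.1) ?_
    rintro Q ⟨hQ, hxQ⟩
    obtain ⟨z0, hz0Q, hz0d⟩ := quad_far N hord hQ hxQ
    obtain ⟨w1, w2, hw12, hC, -⟩ := quad_mu2 N hord hQ hxQ hz0Q hz0d
    have hmu : {e | dd N x e = 1 ∧ adj N e z0}.ncard = 2 := by
      rw [hC]; exact Set.ncard_pair hw12
    obtain ⟨a, b, hab, hCab⟩ := Set.ncard_eq_two.1 hmu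
    obtain ⟨Q0, hQ0, hxQ0, hzQ0, huniq, hcount⟩ := grid_main N hord hz0d hab hCab
    have hQeq : Q = Q0 := huniq Q hQ hxQ hz0Q
    subst hQeq
    have hconv : {a | (a, Q) ∈
        {w : P × Set P | (IsQuad N.Lines w.2 ∧ x ∈ w.2) ∧ w.1 ∈ w.2 ∧ dd N x w.1 = 2}}
        = {z | z ∈ Q ∧ dd N x z = 2} := by
      ext u
      simp only [Set.mem_setOf_eq]
      exact ⟨fun h => h.2, fun h => ⟨⟨hQ, hxQ⟩, h⟩⟩
    rw [hconv]
    exact hcount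
  omega

end Final
end NHG

/-- Let `N` be a near hexagon of order `(2,2)` with `v` points
in total.  Then for every point `x` the number of quads of `N` containing `x`
equals `(63 - v)/12`; in particular `12` divides `63 - v`. -/
theorem near_hexagon_quad_count {P : Type*} (N : NearPolygon P 3)
    (hord : N.hasOrder 2 2) (x : P) :
    12 * {Q : Set P | IsQuad N.Lines Q ∧ x ∈ Q}.ncard + Nat.card P = 63 ∧
      12 ∣ 63 - Nat.card P := by
  have h1 := NHG.count_gamma2 N hord x
  have h2 := NHG.lines_partition N hord x
  have h3 := NHG.nlines_eq N hord
  have h4 := NHG.g2_card N hord x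
  have h5 := NHG.quad_count N hord x
  have hmain : 12 * {Q : Set P | IsQuad N.Lines Q ∧ x ∈ Q}.ncard + Nat.card P = 63 := by
    omega
  exact ⟨hmain, ⟨{Q : Set P | IsQuad N.Lines Q ∧ x ∈ Q}.ncard, by omega⟩⟩
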